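/- arXiv:2406.19914 — 6 statements merged into one kernel-verified Lean document; each statement's English description precedes it below -/
import Mathlib

section
/- Let κ, μ, μ* > 0 be given. The function F(κ_iso, μ_iso) = (log(κ/κ_iso))² + 2(log(μ_iso/μ))² + 3(log(μ_iso/μ*))² on (0,∞) × (0,∞) attains its unique global minimum at κ_iso = κ and μ_iso = (μ² (μ*)³)^(1/5). -/
/-- For given `κ, μ, μ* > 0`, the function
`F(κ_iso, μ_iso) = (log(κ/κ_iso))² + 2(log(μ_iso/μ))² + 3(log(μ_iso/μ*))²`
on `(0,∞) × (0,∞)` attains its unique global minimum at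
`κ_iso = κ`, `μ_iso = (μ² (μ*)³)^(1/5)`. -/
theorem best_log_isotropic_fit (κ μ μs : ℝ) (hκ : 0 < κ) (hμ : 0 < μ) (hμs : 0 < μs) :
    ∀ κiso μiso : ℝ, 0 < κiso → 0 < μiso →
      (κiso, μiso) ≠ (κ, (μ^2 * μs^3) ^ ((1:ℝ)/5)) →
      (Real.log (κ / κ))^2 + 2 * (Real.log ((μ^2 * μs^3) ^ ((1:ℝ)/5) / μ))^2
          + 3 * (Real.log ((μ^2 * μs^3) ^ ((1:ℝ)/5) / μs))^2
        < (Real.log (κ / κiso))^2 + 2 * (Real.log (μiso / μ))^2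
          + 3 * (Real.log (μiso / μs))^2 := by
  intro κiso μiso hκi hμi hne
  have hprod : (0:ℝ) < μ^2 * μs^3 := by positivity
  have hX : (0:ℝ) < (μ^2 * μs^3) ^ ((1:ℝ)/5) := Real.rpow_pos_of_pos hprod _
  have hM : Real.log ((μ^2 * μs^3) ^ ((1:ℝ)/5))
      = (2 * Real.log μ + 3 * Real.log μs) / 5 := by
    rw [Real.log_rpow hprod, Real.log_mul (by positivity) (by positivity),
      Real.log_pow, Real.log_pow]
    push_cast; ring
  rw [Real.log_div (ne_of_gt hκ) (ne_of_gt hκ),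
    Real.log_div (ne_of_gt hX) (ne_of_gt hμ),
    Real.log_div (ne_of_gt hX) (ne_of_gt hμs),
    Real.log_div (ne_of_gt hκ) (ne_of_gt hκi),
    Real.log_div (ne_of_gt hμi) (ne_of_gt hμ),
    Real.log_div (ne_of_gt hμi) (ne_of_gt hμs), hM]
  have key : κiso ≠ κ ∨ μiso ≠ (μ^2 * μs^3) ^ ((1:ℝ)/5) := by
    by_contra h; push_neg at h; exact hne (Prod.ext h.1 h.2)
  rcases key with h | h
  · have hlog : Real.log κ ≠ Real.log κiso := fun he =>
      h (Real.log_injOn_pos (Set.mem_Ioi.mpr hκi) (Set.mem_Ioi.mpr hκ) he.symm)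
    have h1 : 0 < (Real.log κ - Real.log κiso)^2 := by
      have := sub_ne_zero_of_ne hlog; positivity
    nlinarith [sq_nonneg (Real.log μiso - (2 * Real.log μ + 3 * Real.log μs) / 5)]
  · have hlog : Real.log μiso ≠ (2 * Real.log μ + 3 * Real.log μs) / 5 := by
      rw [← hM]
      exact fun he => h (Real.log_injOn_pos (Set.mem_Ioi.mpr hμi) (Set.mem_Ioi.mpr hX) he)
    have h1 : 0 < (Real.log μiso - (2 * Real.log μ + 3 * Real.log μs) / 5)^2 := by
      have := sub_ne_zero_of_ne hlog; positivity
    nlinarith [sq_nonneg (Real.log κ - Real.log κiso)]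
end

section
/- Let λ, μ, μ* ∈ ℝ with μ > 0, λ + μ > 0 and μ* > 0. Then for every (ξ₁, ξ₂) ∈ ℝ² with (ξ₁, ξ₂) ≠ (0,0), one has D(ξ₁, ξ₂) = (λ + 2μ)μ*·ξ₁⁴ + 2(2μ(λ + μ) − λμ*)·ξ₁²ξ₂² + (λ + 2μ)μ*·ξ₂⁴ > 0. In particular, for each fixed ξ₁ ≠ 0 the quartic polynomial ξ₂ ↦ D(ξ₁, ξ₂) has no real roots. -/
/-- For `μ > 0`, `λ + μ > 0`, `μ* > 0`, the acoustic determinant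
`D(ξ₁,ξ₂) = (λ+2μ)μ*ξ₁⁴ + 2(2μ(λ+μ) − λμ*)ξ₁²ξ₂² + (λ+2μ)μ*ξ₂⁴` is positive for
all `(ξ₁,ξ₂) ≠ (0,0)`; in particular, for each fixed `ξ₁ ≠ 0` the quartic
`ξ₂ ↦ D(ξ₁,ξ₂)` has no real roots. -/
theorem acoustic_determinant_pos (lam μ μs : ℝ)
    (hμ : 0 < μ) (hlm : 0 < lam + μ) (hμs : 0 < μs) :
    (∀ ξ₁ ξ₂ : ℝ, (ξ₁, ξ₂) ≠ (0, 0) →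
        0 < (lam + 2*μ) * μs * ξ₁^4 + 2 * (2*μ*(lam + μ) - lam*μs) * ξ₁^2 * ξ₂^2
            + (lam + 2*μ) * μs * ξ₂^4)
      ∧ ∀ ξ₁ : ℝ, ξ₁ ≠ 0 → ∀ ξ₂ : ℝ,
          (lam + 2*μ) * μs * ξ₁^4 + 2 * (2*μ*(lam + μ) - lam*μs) * ξ₁^2 * ξ₂^2
            + (lam + 2*μ) * μs * ξ₂^4 ≠ 0 := by
  have key : ∀ ξ₁ ξ₂ : ℝ, (ξ₁, ξ₂) ≠ (0, 0) →
      0 < (lam + 2*μ) * μs * ξ₁^4 + 2 * (2*μ*(lam + μ) - lam*μs) * ξ₁^2 * ξ₂^2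
          + (lam + 2*μ) * μs * ξ₂^4 := by
    intro ξ₁ ξ₂ h
    have hne : ξ₁ ≠ 0 ∨ ξ₂ ≠ 0 := by
      by_contra hc
      push_neg at hc
      exact h (by simp [hc.1, hc.2])
    have hl2 : 0 < lam + 2*μ := by linarith
    have hid : (lam + 2*μ) * μs * ξ₁^4 + 2 * (2*μ*(lam + μ) - lam*μs) * ξ₁^2 * ξ₂^2
          + (lam + 2*μ) * μs * ξ₂^4
        = (lam + 2*μ) * μs * (ξ₁^2 - ξ₂^2)^2
          + (4*μ*(μs + (lam + μ))) * (ξ₁*ξ₂)^2 := by ring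
    rw [hid]
    have hc : 0 < 4*μ*(μs + (lam + μ)) := by positivity
    rcases eq_or_ne ξ₁ 0 with rfl | h1
    · rcases hne with h1 | h2
      · exact absurd rfl h1
      · have : (0:ℝ)^2 - ξ₂^2 ≠ 0 := by simpa using pow_ne_zero 2 h2
        positivity
    · rcases eq_or_ne ξ₂ 0 with rfl | h2
      · have : ξ₁^2 - (0:ℝ)^2 ≠ 0 := by simpa using pow_ne_zero 2 h1
        positivity
      · have hxy : ξ₁ * ξ₂ ≠ 0 := mul_ne_zero h1 h2
        positivity
  refine ⟨key, fun ξ₁ h1 ξ₂ => ?_⟩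
  exact (key ξ₁ ξ₂ (by simp [h1])).ne'
end

section
/- Let λ, μ, μ* ∈ ℝ with 0 < μ* < μ and λ + μ > 0, and define p = 2λμ* − 4μ(λ+μ), q = 16μ(μ−μ*)(λ+μ)(λ+μ+μ*), s_m = (2μ*(λ+2μ))^(−1/2)·√(−p ∓ √q) (m = 1,2, with − for m=1 and + for m=2), and Y_m^(1) = ((λ+2μ)s_m² − μ*)/s_m. Then for every ξ₁ ≠ 0 and every x₂ > 0, the complex-valued integral ∫_ℝ (μ*ξ₁² + (λ+2μ)ξ₂²)/D(ξ₁,ξ₂) · e^{−i ξ₂ x₂} dξ₂, where D(ξ₁,ξ₂) = (λ+2μ)μ*ξ₁⁴ + 2(2μ(λ+μ) − λμ*)ξ₁²ξ₂² + (λ+2μ)μ*ξ₂⁴, equals (π/(√q·|ξ₁|))·(Y₂^(1)·e^{−s₂|ξ₁|x₂} − Y₁^(1)·e^{−s₁|ξ₁|x₂}). -/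
open MeasureTheory Set Filter
open scoped FourierTransform Real

lemma integrableOn_cexp_Ioi {c : ℂ} (hc : c.re < 0) :
    IntegrableOn (fun t : ℝ => Complex.exp (c * t)) (Ioi (0:ℝ)) := by
  apply Integrable.mono' (exp_neg_integrableOn_Ioi 0 (by linarith : (0:ℝ) < -c.re))
  · exact (Complex.continuous_exp.comp (by continuity)).aestronglyMeasurable.restrict
  · filter_upwards with t
    rw [Complex.norm_exp]
    simp [Complex.mul_re]

lemma integral_cexp_Ioi {c : ℂ} (hc : c.re < 0) :
    ∫ t in Ioi (0:ℝ), Complex.exp (c * t) = -c⁻¹ := by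
  have hc0 : c ≠ 0 := fun h => by simp [h] at hc
  have hd : ∀ x ∈ Ici (0:ℝ), HasDerivAt (fun t : ℝ => c⁻¹ * Complex.exp (c * t))
      (Complex.exp (c * x)) x := by
    intro x _
    have h1 : HasDerivAt (fun t : ℝ => c * (t : ℂ)) c x := by
      simpa using (Complex.ofRealCLM.hasDerivAt (x := x)).const_mul c
    have h2 := (Complex.hasDerivAt_exp (c * x)).comp x h1
    have h3 := h2.const_mul c⁻¹
    have h4 : c⁻¹ * (Complex.exp (c * x) * c) = Complex.exp (c * x) := by
      rw [mul_comm (Complex.exp _) c, inv_mul_cancel_left₀ hc0]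
    rw [h4] at h3
    exact h3
  have ht : Tendsto (fun t : ℝ => c⁻¹ * Complex.exp (c * t)) atTop (nhds 0) := by
    rw [tendsto_zero_iff_norm_tendsto_zero]
    have heq : (fun t : ℝ => ‖c⁻¹ * Complex.exp (c * t)‖)
        = fun t : ℝ => ‖c⁻¹‖ * Real.exp (c.re * t) := by
      funext t
      rw [norm_mul, Complex.norm_exp]
      simp [Complex.mul_re]
    rw [heq]
    have h4 : Tendsto (fun t : ℝ => c.re * t) atTop atBot :=
      tendsto_id.const_mul_atTop_of_neg hc
    simpa using (Real.tendsto_exp_atBot.comp h4).const_mul ‖c⁻¹‖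
  have := integral_Ioi_of_hasDerivAt_of_tendsto' hd (integrableOn_cexp_Ioi hc) ht
  simpa using this

lemma integrableOn_cexp_Iic {c : ℂ} (hc : 0 < c.re) :
    IntegrableOn (fun t : ℝ => Complex.exp (c * t)) (Iic (0:ℝ)) := by
  rw [← Measure.map_neg_eq_self (volume : Measure ℝ)]
  have m : MeasurableEmbedding fun x : ℝ => -x := (Homeomorph.neg ℝ).measurableEmbedding
  rw [m.integrableOn_map_iff]
  simp only [Function.comp_def, neg_preimage, neg_Iic, neg_zero]
  rw [integrableOn_Ici_iff_integrableOn_Ioi]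
  have h := integrableOn_cexp_Ioi (c := -c) (by simpa using hc)
  exact h.congr_fun (fun x _ => by push_cast; ring_nf) measurableSet_Ioi

lemma integral_cexp_Iic {c : ℂ} (hc : 0 < c.re) :
    ∫ t in Iic (0:ℝ), Complex.exp (c * t) = c⁻¹ := by
  have h1 : ∫ t in Iic (0:ℝ), Complex.exp (c * t)
      = ∫ t in Iic (0:ℝ), (fun u : ℝ => Complex.exp (-c * u)) (-t) := by
    refine setIntegral_congr_fun measurableSet_Iic fun t _ => ?_
    push_cast; ring_nf
  rw [h1, integral_comp_neg_Iic (0:ℝ) (fun u : ℝ => Complex.exp (-c * u)), neg_zero,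
    integral_cexp_Ioi (by simpa using hc : (-c).re < 0), inv_neg, neg_neg]

lemma integrable_inv_sq_add_sq (a : ℝ) (ha : 0 < a) :
    Integrable (fun ξ : ℝ => (a^2 + ξ^2)⁻¹) := by
  have h := integrable_inv_one_add_sq.comp_div (ne_of_gt ha)
  apply (h.const_mul (a^2)⁻¹).congr
  filter_upwards with ξ
  rw [div_pow]
  field_simp

lemma integrable_kernel (a x : ℝ) (ha : 0 < a) :
    Integrable (fun ξ : ℝ =>
      (1 / ((ξ:ℂ)^2 + (a:ℂ)^2)) * Complex.exp (-Complex.I * ξ * x)) := by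
  have hcast : ∀ ξ : ℝ, ((ξ:ℂ)^2 + (a:ℂ)^2) = ((ξ^2 + a^2 : ℝ) : ℂ) := by
    intro ξ; push_cast; ring
  have hne : ∀ ξ : ℝ, ((ξ:ℂ)^2 + (a:ℂ)^2) ≠ 0 := by
    intro ξ; rw [hcast ξ]
    exact_mod_cast ne_of_gt (by positivity : (0:ℝ) < ξ^2 + a^2)
  have hmeas : AEStronglyMeasurable (fun ξ : ℝ =>
      (1 / ((ξ:ℂ)^2 + (a:ℂ)^2)) * Complex.exp (-Complex.I * ξ * x)) volume := by
    apply Continuous.aestronglyMeasurable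
    exact (continuous_const.div (by continuity) hne).mul
      (Complex.continuous_exp.comp (by continuity))
  apply Integrable.mono' (integrable_inv_sq_add_sq a ha) hmeas
  filter_upwards with ξ
  rw [norm_mul, hcast ξ]
  have h1 : ‖Complex.exp (-Complex.I * ξ * x)‖ = 1 := by
    rw [Complex.norm_exp]
    simp [Complex.mul_re]
  rw [h1, mul_one, norm_div, norm_one, Complex.norm_real, Real.norm_eq_abs,
    abs_of_pos (by positivity : (0:ℝ) < ξ^2 + a^2), one_div, add_comm (ξ^2)]

lemma integrable_exp_neg_abs_c (a : ℝ) (ha : 0 < a) :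
    Integrable (fun t : ℝ => ((Real.exp (-a * |t|) : ℝ) : ℂ)) := by
  have h1 : IntegrableOn (fun t : ℝ => Real.exp (-a * |t|)) (Ioi (0:ℝ)) :=
    (exp_neg_integrableOn_Ioi 0 ha).congr_fun
      (fun t ht => by rw [abs_of_pos ht]) measurableSet_Ioi
  have h2 : IntegrableOn (fun t : ℝ => Real.exp (-a * |t|)) (Iic (0:ℝ)) := by
    rw [← Measure.map_neg_eq_self (volume : Measure ℝ)]
    have m : MeasurableEmbedding fun x : ℝ => -x := (Homeomorph.neg ℝ).measurableEmbedding
    rw [m.integrableOn_map_iff]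
    simp only [Function.comp_def, abs_neg, neg_preimage, neg_Iic, neg_zero]
    exact (integrableOn_Ici_iff_integrableOn_Ioi).mpr h1
  have h3 := h2.union h1
  rw [Iic_union_Ioi] at h3
  exact (integrableOn_univ.mp h3).ofReal

lemma fourier_exp_neg_abs (a : ℝ) (ha : 0 < a) (ξ : ℝ) :
    𝓕 (fun t : ℝ => ((Real.exp (-a * |t|) : ℝ) : ℂ)) ξ
      = ((2*a / (a^2 + (2*Real.pi*ξ)^2) : ℝ) : ℂ) := by
  rw [Real.fourier_real_eq]
  have hIoi : ∀ t ∈ Ioi (0:ℝ),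
      (𝐞 (-(t*ξ)) • ((Real.exp (-a * |t|) : ℝ) : ℂ) : ℂ)
        = Complex.exp (((-a : ℂ) - (2*Real.pi*ξ)*Complex.I) * t) := by
    intro t ht
    rw [Circle.smul_def, Real.fourierChar_apply, abs_of_pos ht, smul_eq_mul,
      Complex.ofReal_exp, ← Complex.exp_add]
    congr 1
    push_cast
    ring
  have hIic : ∀ t ∈ Iic (0:ℝ),
      (𝐞 (-(t*ξ)) • ((Real.exp (-a * |t|) : ℝ) : ℂ) : ℂ)
        = Complex.exp (((a : ℂ) - (2*Real.pi*ξ)*Complex.I) * t) := by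
    intro t ht
    rw [Circle.smul_def, Real.fourierChar_apply, abs_of_nonpos ht, smul_eq_mul,
      Complex.ofReal_exp, ← Complex.exp_add]
    congr 1
    push_cast
    ring
  have hre1 : ((-a : ℂ) - (2*Real.pi*ξ)*Complex.I).re < 0 := by
    simp; linarith
  have hre2 : 0 < ((a : ℂ) - (2*Real.pi*ξ)*Complex.I).re := by
    simp; linarith
  have hi1 : IntegrableOn (fun t : ℝ => (𝐞 (-(t*ξ)) • ((Real.exp (-a * |t|) : ℝ) : ℂ) : ℂ))
      (Ioi (0:ℝ)) :=
    (integrableOn_cexp_Ioi hre1).congr_fun (fun t ht => (hIoi t ht).symm) measurableSet_Ioi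
  have hi2 : IntegrableOn (fun t : ℝ => (𝐞 (-(t*ξ)) • ((Real.exp (-a * |t|) : ℝ) : ℂ) : ℂ))
      (Iic (0:ℝ)) :=
    (integrableOn_cexp_Iic hre2).congr_fun (fun t ht => (hIic t ht).symm) measurableSet_Iic
  rw [← intervalIntegral.integral_Iic_add_Ioi hi2 hi1,
    setIntegral_congr_fun measurableSet_Iic hIic,
    setIntegral_congr_fun measurableSet_Ioi hIoi,
    integral_cexp_Iic hre2, integral_cexp_Ioi hre1]
  have hne1 : ((a : ℂ) - (2*Real.pi*ξ)*Complex.I) ≠ 0 := by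
    intro h
    have := congrArg Complex.re h
    simp at this; linarith
  have hne2 : ((-a : ℂ) - (2*Real.pi*ξ)*Complex.I) ≠ 0 := by
    intro h
    have := congrArg Complex.re h
    simp at this; linarith
  have hne3 : ((a^2 + (2*Real.pi*ξ)^2 : ℝ) : ℂ) ≠ 0 :=
    Complex.ofReal_ne_zero.mpr (ne_of_gt (by positivity))
  have hne4 : ((a:ℂ)^2 + (Real.pi:ℂ)^2*(ξ:ℂ)^2*4) ≠ 0 := by
    have h5 : ((a:ℂ)^2 + (Real.pi:ℂ)^2*(ξ:ℂ)^2*4) = ((a^2 + Real.pi^2*ξ^2*4 : ℝ) : ℂ) := by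
      push_cast; ring
    rw [h5]
    exact_mod_cast ne_of_gt (by positivity)
  push_cast
  field_simp
  ring_nf
  rw [Complex.I_sq]
  field_simp
  ring

lemma poisson (a x : ℝ) (ha : 0 < a) :
    ∫ ξ : ℝ, (1 / ((ξ:ℂ)^2 + (a:ℂ)^2)) * Complex.exp (-Complex.I * ξ * x)
      = ((Real.pi / a * Real.exp (-a * |x|) : ℝ) : ℂ) := by
  set f : ℝ → ℂ := fun t => ((Real.exp (-a * |t|) : ℝ) : ℂ) with hf
  have hFf : 𝓕 f = fun ξ : ℝ => ((2*a / (a^2 + (2*Real.pi*ξ)^2) : ℝ) : ℂ) :=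
    funext (fourier_exp_neg_abs a ha)
  have hint : Integrable (𝓕 f) := by
    rw [hFf]
    apply Integrable.ofReal
    have h2 := (integrable_inv_sq_add_sq a ha).comp_mul_left'
      (mul_ne_zero two_ne_zero Real.pi_ne_zero)
    apply (h2.const_mul (2*a)).congr
    filter_upwards with ξ
    rfl
  have hcont : Continuous f := by
    apply Complex.continuous_ofReal.comp
    exact Real.continuous_exp.comp (continuous_const.mul continuous_abs)
  have hinv := (integrable_exp_neg_abs_c a ha).fourierInv_fourier_eq hint
    (hcont.continuousAt (x := -x))
  rw [Real.fourierInv_eq_fourier_neg, hFf, neg_neg,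
    Real.fourier_real_eq] at hinv
  -- hinv : ∫ u, 𝐞 (-(u*x)) • ((2a/(a²+(2πu)²) : ℝ) : ℂ) = f (-x)
  have hscale := Measure.integral_comp_mul_left
    (fun ξ : ℝ => (1 / ((ξ:ℂ)^2 + (a:ℂ)^2)) * Complex.exp (-Complex.I * ξ * x))
    (2*Real.pi)
  have hpt : ∀ u : ℝ,
      (1 / (((2*Real.pi*u : ℝ):ℂ)^2 + (a:ℂ)^2))
          * Complex.exp (-Complex.I * ((2*Real.pi*u : ℝ):ℂ) * x)
        = ((2*a:ℝ):ℂ)⁻¹ * ((𝐞 (-(u*x)) • (((2*a / (a^2 + (2*Real.pi*u)^2) : ℝ)):ℂ)) : ℂ) := by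
    intro u
    rw [Circle.smul_def, Real.fourierChar_apply, smul_eq_mul]
    have hd : ((a^2 + (2*Real.pi*u)^2 : ℝ) : ℂ) ≠ 0 :=
      Complex.ofReal_ne_zero.mpr (ne_of_gt (by positivity))
    have ha' : ((2*a : ℝ) : ℂ) ≠ 0 := Complex.ofReal_ne_zero.mpr (by positivity)
    have hexp : Complex.exp (-Complex.I * ((2*Real.pi*u : ℝ):ℂ) * x)
        = Complex.exp (((2*Real.pi*(-(u*x)) : ℝ):ℂ) * Complex.I) := by
      congr 1
      push_cast
      ring
    have hAB : (((2*Real.pi*u : ℝ):ℂ))^2 + (a:ℂ)^2 = ((a^2 + (2*Real.pi*u)^2 : ℝ) : ℂ) := by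
      push_cast; ring
    have hD : ((Real.pi:ℂ)^2*(u:ℂ)^2*4 + (a:ℂ)^2) ≠ 0 := by
      have h6 : ((Real.pi:ℂ)^2*(u:ℂ)^2*4 + (a:ℂ)^2) = ((Real.pi^2*u^2*4 + a^2 : ℝ):ℂ) := by
        push_cast; ring
      rw [h6]; exact_mod_cast ne_of_gt (by positivity)
    rw [hexp, hAB, Complex.ofReal_div]
    field_simp
    have haC : (a:ℂ) ≠ 0 := Complex.ofReal_ne_zero.mpr (ne_of_gt ha)
    rw [div_mul_cancel_right₀ (by exact_mod_cast (by positivity : (a*2:ℝ) ≠ 0)), one_div]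
  rw [funext hpt, integral_const_mul, hinv] at hscale
  -- hscale : (2a)⁻¹ * f(-x) = |(2π)⁻¹| • ∫ target
  have h2pi : |(2*Real.pi)⁻¹| = (2*Real.pi)⁻¹ :=
    abs_of_pos (by positivity)
  rw [h2pi] at hscale
  have : ∫ ξ : ℝ, (1 / ((ξ:ℂ)^2 + (a:ℂ)^2)) * Complex.exp (-Complex.I * ξ * x)
      = (2*Real.pi) • (((2*a:ℝ):ℂ)⁻¹ * f (-x)) := by
    rw [hscale, smul_smul]
    rw [mul_inv_cancel₀ (by positivity : (2*Real.pi) ≠ 0), one_smul]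
  rw [this, hf]
  simp only [abs_neg]
  rw [Complex.real_smul]
  push_cast
  have ha' : (a:ℂ) ≠ 0 := Complex.ofReal_ne_zero.mpr (ne_of_gt ha)
  field_simp


/-- Residue computation of the inverse Fourier transform in `ξ₂` of
`C₁₁(ξ)/D(ξ)` for a cubic plane strain material: for `ξ₁ ≠ 0` and `x₂ > 0`,
`∫_ℝ (μ*ξ₁² + (λ+2μ)ξ₂²)/D(ξ₁,ξ₂) e^{−iξ₂x₂} dξ₂
  = (π/(√q |ξ₁|)) (Y₂⁽¹⁾ e^{−s₂|ξ₁|x₂} − Y₁⁽¹⁾ e^{−s₁|ξ₁|x₂})`. -/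
theorem Q11_residue_formula (lam μ μs : ℝ)
    (hμs : 0 < μs) (hμ : μs < μ) (hlm : 0 < lam + μ)
    (p q s₁ s₂ Y₁ Y₂ : ℝ)
    (hp : p = 2*lam*μs - 4*μ*(lam + μ))
    (hq : q = 16*μ*(μ - μs)*(lam + μ)*(lam + μ + μs))
    (hs₁ : s₁ = (2*μs*(lam + 2*μ)) ^ (-(1:ℝ)/2) * Real.sqrt (-p - Real.sqrt q))
    (hs₂ : s₂ = (2*μs*(lam + 2*μ)) ^ (-(1:ℝ)/2) * Real.sqrt (-p + Real.sqrt q))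
    (hY₁ : Y₁ = ((lam + 2*μ) * s₁^2 - μs) / s₁)
    (hY₂ : Y₂ = ((lam + 2*μ) * s₂^2 - μs) / s₂) :
    ∀ ξ₁ : ℝ, ξ₁ ≠ 0 → ∀ x₂ : ℝ, 0 < x₂ →
      (∫ ξ₂ : ℝ,
          ((μs * ξ₁^2 + (lam + 2*μ) * ξ₂^2 : ℝ) : ℂ)
              / (((lam + 2*μ) * μs * ξ₁^4 + 2 * (2*μ*(lam + μ) - lam*μs) * ξ₁^2 * ξ₂^2
                  + (lam + 2*μ) * μs * ξ₂^4 : ℝ) : ℂ)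
            * Complex.exp (-Complex.I * (ξ₂ : ℂ) * (x₂ : ℂ)))
        = ((Real.pi / (Real.sqrt q * |ξ₁|)
            * (Y₂ * Real.exp (-s₂ * |ξ₁| * x₂) - Y₁ * Real.exp (-s₁ * |ξ₁| * x₂)) : ℝ) : ℂ) := by
  intro ξ₁ hξ₁ x₂ hx₂
  have hμ0 : 0 < μ := lt_trans hμs hμ
  have hl2m : 0 < lam + 2*μ := by linarith
  have hc : 0 < (lam + 2*μ) * μs := by positivity
  have hp0 : p < 0 := by rw [hp]; nlinarith
  have hq0 : 0 < q := by
    rw [hq]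
    have h1 : 0 < μ - μs := by linarith
    have h2 : 0 < lam + μ + μs := by linarith
    positivity
  have hq' : 0 < Real.sqrt q := Real.sqrt_pos.mpr hq0
  have hid : p^2 - q = 4*((lam + 2*μ) * μs)^2 := by rw [hp, hq]; ring
  have hql : Real.sqrt q < -p := by
    have h1 : Real.sqrt q < Real.sqrt (p^2) := by
      apply Real.sqrt_lt_sqrt hq0.le
      nlinarith
    rwa [Real.sqrt_sq_eq_abs, abs_of_neg hp0] at h1
  have h2c : (0:ℝ) < 2*μs*(lam + 2*μ) := by positivity
  have hrpow : ((2*μs*(lam + 2*μ)) ^ (-(1:ℝ)/2))^2 = (2*((lam + 2*μ) * μs))⁻¹ := by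
    rw [← Real.rpow_natCast ((2*μs*(lam + 2*μ)) ^ (-(1:ℝ)/2)) 2, ← Real.rpow_mul h2c.le]
    rw [show (-(1:ℝ)/2 * ((2:ℕ):ℝ)) = -1 by push_cast; norm_num]
    rw [Real.rpow_neg_one]
    congr 1
    ring
  have hs₁sq : s₁^2 = (-p - Real.sqrt q)/(2*((lam + 2*μ) * μs)) := by
    rw [hs₁, mul_pow, hrpow, Real.sq_sqrt (by linarith : (0:ℝ) ≤ -p - Real.sqrt q),
      inv_mul_eq_div]
  have hs₂sq : s₂^2 = (-p + Real.sqrt q)/(2*((lam + 2*μ) * μs)) := by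
    rw [hs₂, mul_pow, hrpow, Real.sq_sqrt (by linarith : (0:ℝ) ≤ -p + Real.sqrt q),
      inv_mul_eq_div]
  have hs₁pos : 0 < s₁ := by
    rw [hs₁]
    exact mul_pos (Real.rpow_pos_of_pos h2c _) (Real.sqrt_pos.mpr (by linarith))
  have hs₂pos : 0 < s₂ := by
    rw [hs₂]
    exact mul_pos (Real.rpow_pos_of_pos h2c _) (Real.sqrt_pos.mpr (by linarith))
  have hsum : ((lam + 2*μ) * μs) * (s₁^2 + s₂^2) = -p := by
    rw [hs₁sq, hs₂sq]
    field_simp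
    ring
  have hdiff : ((lam + 2*μ) * μs) * (s₂^2 - s₁^2) = Real.sqrt q := by
    rw [hs₁sq, hs₂sq]
    field_simp
    ring
  have hprod : s₁^2 * s₂^2 = 1 := by
    rw [hs₁sq, hs₂sq, div_mul_div_comm]
    rw [div_eq_one_iff_eq (by positivity : (2*((lam + 2*μ) * μs))*(2*((lam + 2*μ) * μs)) ≠ 0)]
    have hsq := Real.sq_sqrt hq0.le
    linear_combination hid - hsq
  have hkpos : 0 < |ξ₁| := abs_pos.mpr hξ₁
  have hk2 : |ξ₁|^2 = ξ₁^2 := sq_abs ξ₁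
  have ha₁ : 0 < s₁ * |ξ₁| := mul_pos hs₁pos hkpos
  have ha₂ : 0 < s₂ * |ξ₁| := mul_pos hs₂pos hkpos
  set B₁ := (μs - (lam + 2*μ)*s₁^2)/Real.sqrt q with hB₁
  set B₂ := ((lam + 2*μ)*s₂^2 - μs)/Real.sqrt q with hB₂
  have hDfac : ∀ ξ₂ : ℝ, (lam + 2*μ) * μs * ξ₁^4 + 2 * (2*μ*(lam + μ) - lam*μs) * ξ₁^2 * ξ₂^2
      + (lam + 2*μ) * μs * ξ₂^4
      = ((lam + 2*μ) * μs) * ((ξ₂^2 + (s₁*|ξ₁|)^2) * (ξ₂^2 + (s₂*|ξ₁|)^2)) := by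
    intro ξ₂
    have hmid : 2 * (2*μ*(lam + μ) - lam*μs) = -p := by rw [hp]; ring
    rw [hmid, mul_pow, mul_pow, hk2]
    linear_combination (-(ξ₁^2*ξ₂^2))*hsum + (-(((lam + 2*μ) * μs)*ξ₁^4))*hprod
  have hN' : ∀ ξ₂ : ℝ, μs * ξ₁^2 + (lam + 2*μ) * ξ₂^2
      = B₁*(((lam + 2*μ) * μs)*(ξ₂^2 + (s₂*|ξ₁|)^2))
        + B₂*(((lam + 2*μ) * μs)*(ξ₂^2 + (s₁*|ξ₁|)^2)) := by
    intro ξ₂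
    rw [hB₁, hB₂, div_mul_eq_mul_div, div_mul_eq_mul_div, ← add_div,
      eq_div_iff (ne_of_gt hq')]
    rw [mul_pow, mul_pow, hk2]
    linear_combination (-(((lam + 2*μ)*ξ₂^2 + μs*ξ₁^2)))*hdiff
  have hreal : ∀ ξ₂ : ℝ, (μs * ξ₁^2 + (lam + 2*μ) * ξ₂^2)
        / ((lam + 2*μ) * μs * ξ₁^4 + 2 * (2*μ*(lam + μ) - lam*μs) * ξ₁^2 * ξ₂^2
            + (lam + 2*μ) * μs * ξ₂^4)
      = B₁ * (1/(ξ₂^2 + (s₁*|ξ₁|)^2)) + B₂ * (1/(ξ₂^2 + (s₂*|ξ₁|)^2)) := by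
    intro ξ₂
    have d₁ : (0:ℝ) < ξ₂^2 + (s₁*|ξ₁|)^2 := by positivity
    have d₂ : (0:ℝ) < ξ₂^2 + (s₂*|ξ₁|)^2 := by positivity
    rw [hDfac ξ₂, div_eq_iff (by positivity :
      ((lam + 2*μ) * μs) * ((ξ₂^2 + (s₁*|ξ₁|)^2) * (ξ₂^2 + (s₂*|ξ₁|)^2)) ≠ 0)]
    have e : (B₁ * (1/(ξ₂^2 + (s₁*|ξ₁|)^2)) + B₂ * (1/(ξ₂^2 + (s₂*|ξ₁|)^2)))
          * (((lam + 2*μ) * μs) * ((ξ₂^2 + (s₁*|ξ₁|)^2) * (ξ₂^2 + (s₂*|ξ₁|)^2)))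
        = B₁*(((lam + 2*μ) * μs)*(ξ₂^2 + (s₂*|ξ₁|)^2))
          + B₂*(((lam + 2*μ) * μs)*(ξ₂^2 + (s₁*|ξ₁|)^2)) := by
      field_simp
    rw [e]
    exact hN' ξ₂
  have hptC : ∀ ξ₂ : ℝ,
      ((μs * ξ₁^2 + (lam + 2*μ) * ξ₂^2 : ℝ) : ℂ)
          / (((lam + 2*μ) * μs * ξ₁^4 + 2 * (2*μ*(lam + μ) - lam*μs) * ξ₁^2 * ξ₂^2
              + (lam + 2*μ) * μs * ξ₂^4 : ℝ) : ℂ)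
        * Complex.exp (-Complex.I * (ξ₂ : ℂ) * (x₂ : ℂ))
      = ((B₁:ℝ):ℂ) * ((1 / ((ξ₂:ℂ)^2 + ((s₁*|ξ₁| : ℝ):ℂ)^2))
            * Complex.exp (-Complex.I * ξ₂ * x₂))
        + ((B₂:ℝ):ℂ) * ((1 / ((ξ₂:ℂ)^2 + ((s₂*|ξ₁| : ℝ):ℂ)^2))
            * Complex.exp (-Complex.I * ξ₂ * x₂)) := by
    intro ξ₂
    rw [← Complex.ofReal_div, hreal ξ₂]
    push_cast
    ring
  refine Eq.trans (integral_congr_ae (Filter.Eventually.of_forall hptC)) ?_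
  rw [integral_add ((integrable_kernel _ x₂ ha₁).const_mul _)
    ((integrable_kernel _ x₂ ha₂).const_mul _),
    integral_const_mul, integral_const_mul,
    poisson (s₁*|ξ₁|) x₂ ha₁, poisson (s₂*|ξ₁|) x₂ ha₂, abs_of_pos hx₂]
  rw [← Complex.ofReal_mul, ← Complex.ofReal_mul, ← Complex.ofReal_add, Complex.ofReal_inj]
  rw [show (-(s₁ * |ξ₁|) * x₂ : ℝ) = -s₁ * |ξ₁| * x₂ by ring,
    show (-(s₂ * |ξ₁|) * x₂ : ℝ) = -s₂ * |ξ₁| * x₂ by ring]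
  rw [hB₁, hB₂, hY₁, hY₂]
  field_simp
  ring
end

section
/- Let λ, μ, μ* ∈ ℝ with 0 < μ* < μ and λ + μ > 0. Define p = 2λμ* − 4μ(λ+μ), q = 16μ(μ−μ*)(λ+μ)(λ+μ+μ*), s_m = (2μ*(λ+2μ))^(−1/2)·√(−p ∓ √q) (m = 1,2), Y_m^(1) = ((λ+2μ)s_m² − μ*)/s_m, r_m(x₁,x₂) = √(x₁² + s_m² x₂²), θ_m(x₁,x₂) = arctan(s_m x₂/x₁), and set u₁(x₁,x₂) = (1/(2π√q))·(Y₁^(1) log r₁ − Y₂^(1) log r₂), u₂(x₁,x₂) = ((λ+μ*)/(2π√q))·(θ₂ − θ₁). Then u = (u₁, u₂) satisfies the cubic plane strain equilibrium equations with zero body force on the open half-plane {(x₁,x₂) : x₁ > 0}: (λ+2μ)·∂²u₁/∂x₁² + μ*·∂²u₁/∂x₂² + (λ+μ*)·∂²u₂/∂x₁∂x₂ = 0 and (λ+2μ)·∂²u₂/∂x₂² + μ*·∂²u₂/∂x₁² + (λ+μ*)·∂²u₁/∂x₁∂x₂ = 0. -/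
open Real Filter

private lemma log_sqrt_eq {c : ℝ} (hc : 0 ≤ c) :
    (fun t : ℝ => Real.log (Real.sqrt (t ^ 2 + c))) = fun t => (1/2) * Real.log (t ^ 2 + c) := by
  funext t
  rw [Real.log_sqrt (by positivity)]
  ring

private lemma log_sqrt_eq' {d s : ℝ} (hd : 0 ≤ d) :
    (fun t : ℝ => Real.log (Real.sqrt (d + s ^ 2 * t ^ 2)))
      = fun t => (1/2) * Real.log (d + s ^ 2 * t ^ 2) := by
  funext t
  rw [Real.log_sqrt (by positivity)]
  ring

private lemma hq2 (c x : ℝ) : HasDerivAt (fun t : ℝ => t ^ 2 + c) (2 * x) x := by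
  simpa using (hasDerivAt_pow 2 x).add_const c

private lemma hq2' (d s y : ℝ) : HasDerivAt (fun t : ℝ => d + s ^ 2 * t ^ 2) (2 * s ^ 2 * y) y := by
  have := ((hasDerivAt_pow 2 y).const_mul (s ^ 2)).const_add d
  refine this.congr_deriv ?_
  all_goals ring

private lemma hdLSx (c x : ℝ) (hc : 0 ≤ c) (h : x ^ 2 + c ≠ 0) :
    HasDerivAt (fun t : ℝ => Real.log (Real.sqrt (t ^ 2 + c))) (x / (x ^ 2 + c)) x := by
  rw [log_sqrt_eq hc]
  have h1 := ((Real.hasDerivAt_log h).comp x (hq2 c x)).const_mul (1/2 : ℝ)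
  refine h1.congr_deriv ?_
  field_simp
  try ring

private lemma hdLSy (d s y : ℝ) (hd : 0 ≤ d) (h : d + s ^ 2 * y ^ 2 ≠ 0) :
    HasDerivAt (fun t : ℝ => Real.log (Real.sqrt (d + s ^ 2 * t ^ 2)))
      (s ^ 2 * y / (d + s ^ 2 * y ^ 2)) y := by
  rw [log_sqrt_eq' hd]
  have h1 := ((Real.hasDerivAt_log h).comp y (hq2' d s y)).const_mul (1/2 : ℝ)
  refine h1.congr_deriv ?_
  field_simp
  try ring

private lemma hdD1 (c x : ℝ) (h : x ^ 2 + c ≠ 0) :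
    HasDerivAt (fun t : ℝ => t / (t ^ 2 + c)) ((c - x ^ 2) / (x ^ 2 + c) ^ 2) x := by
  have h1 := (hasDerivAt_id' (x := x)).div (hq2 c x) h
  refine h1.congr_deriv ?_
  ring

private lemma hdD2 (d s y : ℝ) (h : d + s ^ 2 * y ^ 2 ≠ 0) :
    HasDerivAt (fun t : ℝ => s ^ 2 * t / (d + s ^ 2 * t ^ 2))
      (s ^ 2 * (d - s ^ 2 * y ^ 2) / (d + s ^ 2 * y ^ 2) ^ 2) y := by
  have h1 := ((hasDerivAt_id' (x := y)).const_mul (s ^ 2)).div (hq2' d s y) h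
  refine h1.congr_deriv ?_
  ring

private lemma hdD3 (k c x : ℝ) (h : x ^ 2 + c ≠ 0) :
    HasDerivAt (fun t : ℝ => k / (t ^ 2 + c)) (-(k * (2 * x)) / (x ^ 2 + c) ^ 2) x := by
  have h1 := (hasDerivAt_const x k).div (hq2 c x) h
  refine h1.congr_deriv ?_
  ring

private lemma hdD4 (s c x : ℝ) (h : x ^ 2 + c ≠ 0) :
    HasDerivAt (fun t : ℝ => s * t / (t ^ 2 + c)) (s * (c - x ^ 2) / (x ^ 2 + c) ^ 2) x := by
  have h1 := ((hasDerivAt_id' (x := x)).const_mul s).div (hq2 c x) h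
  refine h1.congr_deriv ?_
  ring

private lemma hdD5 (w k s y : ℝ) (h : k + s ^ 2 * y ^ 2 ≠ 0) :
    HasDerivAt (fun t : ℝ => w / (k + s ^ 2 * t ^ 2))
      (-(w * (2 * s ^ 2 * y)) / (k + s ^ 2 * y ^ 2) ^ 2) y := by
  have h1 := (hasDerivAt_const y w).div (hq2' k s y) h
  refine h1.congr_deriv ?_
  ring

private lemma hdTy (s x y : ℝ) (hx : x ≠ 0) :
    HasDerivAt (fun t : ℝ => Real.arctan (s * t / x)) (s * x / (x ^ 2 + s ^ 2 * y ^ 2)) y := by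
  have hi : HasDerivAt (fun t : ℝ => s * t / x) (s / x) y := by
    simpa using (((hasDerivAt_id' (x := y)).const_mul s).div_const x)
  have h1 := (Real.hasDerivAt_arctan (s * y / x)).comp y hi
  refine h1.congr_deriv ?_
  have hx2 : x ^ 2 + s ^ 2 * y ^ 2 ≠ 0 := by positivity
  have h3 : 1 + (s * y / x) ^ 2 ≠ 0 := by positivity
  field_simp

private lemma hdTx (s b x : ℝ) (hx : x ≠ 0) :
    HasDerivAt (fun t : ℝ => Real.arctan (s * b / t)) (-(s * b) / (x ^ 2 + s ^ 2 * b ^ 2)) x := by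
  have hi : HasDerivAt (fun t : ℝ => s * b / t) (-(s * b) / x ^ 2) x := by
    simp only [div_eq_mul_inv]
    have := (hasDerivAt_inv hx).const_mul (s * b)
    refine this.congr_deriv ?_
    ring
  have h1 := (Real.hasDerivAt_arctan (s * b / x)).comp x hi
  refine h1.congr_deriv ?_
  have hx2 : x ^ 2 + s ^ 2 * b ^ 2 ≠ 0 := by positivity
  have h3 : 1 + (s * b / x) ^ 2 ≠ 0 := by positivity
  field_simp
set_option maxHeartbeats 1000000 in
/-- The plane strain Green's function for a unit horizontal concentrated force in
a cubic material (`0 < μ* < μ`, `λ + μ > 0`) satisfies the cubic equilibrium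
equations with zero body force on the half-plane `x₁ > 0`. -/
theorem greens_function_horizontal_force_equilibrium (lam μ μs : ℝ)
    (hμs : 0 < μs) (hμ : μs < μ) (hlm : 0 < lam + μ)
    (p q s₁ s₂ Y₁ Y₂ : ℝ) (u₁ u₂ : ℝ → ℝ → ℝ)
    (hp : p = 2*lam*μs - 4*μ*(lam + μ))
    (hq : q = 16*μ*(μ - μs)*(lam + μ)*(lam + μ + μs))
    (hs₁ : s₁ = (2*μs*(lam + 2*μ)) ^ (-(1:ℝ)/2) * Real.sqrt (-p - Real.sqrt q))
    (hs₂ : s₂ = (2*μs*(lam + 2*μ)) ^ (-(1:ℝ)/2) * Real.sqrt (-p + Real.sqrt q))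
    (hY₁ : Y₁ = ((lam + 2*μ) * s₁^2 - μs) / s₁)
    (hY₂ : Y₂ = ((lam + 2*μ) * s₂^2 - μs) / s₂)
    (hu₁ : u₁ = fun x₁ x₂ => 1 / (2 * Real.pi * Real.sqrt q)
        * (Y₁ * Real.log (Real.sqrt (x₁^2 + s₁^2 * x₂^2))
            - Y₂ * Real.log (Real.sqrt (x₁^2 + s₂^2 * x₂^2))))
    (hu₂ : u₂ = fun x₁ x₂ => (lam + μs) / (2 * Real.pi * Real.sqrt q)
        * (Real.arctan (s₂ * x₂ / x₁) - Real.arctan (s₁ * x₂ / x₁))) :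
    ∀ a b : ℝ, 0 < a →
      (lam + 2*μ) * deriv (fun x => deriv (fun t => u₁ t b) x) a
          + μs * deriv (fun y => deriv (fun t => u₁ a t) y) b
          + (lam + μs) * deriv (fun x => deriv (fun y => u₂ x y) b) a = 0
      ∧ (lam + 2*μ) * deriv (fun y => deriv (fun t => u₂ a t) y) b
          + μs * deriv (fun x => deriv (fun t => u₂ t b) x) a
          + (lam + μs) * deriv (fun x => deriv (fun y => u₁ x y) b) a = 0 := by
  intro a b ha
  have hμ0 : 0 < μ := hμs.trans hμ
  have hl2μ : 0 < lam + 2*μ := by linarith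
  have hcpos : 0 < 2*μs*(lam + 2*μ) := by positivity
  have hq0 : 0 < q := by
    rw [hq]
    have h1 : 0 < μ - μs := by linarith
    have h2 : 0 < lam + μ + μs := by linarith
    positivity
  have hp0 : p < 0 := by
    rw [hp]
    nlinarith [mul_pos hlm (show (0:ℝ) < 2*μ - μs by linarith), mul_pos hμ0 hμs]
  have hqpc : q = p^2 - (2*μs*(lam + 2*μ))^2 := by rw [hq, hp]; ring
  have hsqlt : Real.sqrt q < -p := by
    rw [Real.sqrt_lt' (by linarith)]
    nlinarith [hcpos]
  have hsq0 : 0 ≤ Real.sqrt q := Real.sqrt_nonneg q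
  have hrp : 0 < (2*μs*(lam + 2*μ)) ^ (-(1:ℝ)/2) := Real.rpow_pos_of_pos hcpos _
  have hs1pos : 0 < s₁ := by
    rw [hs₁]; exact mul_pos hrp (Real.sqrt_pos.mpr (by linarith))
  have hs2pos : 0 < s₂ := by
    rw [hs₂]; exact mul_pos hrp (Real.sqrt_pos.mpr (by linarith))
  have hrsq : ((2*μs*(lam + 2*μ)) ^ (-(1:ℝ)/2))^2 = (2*μs*(lam + 2*μ))⁻¹ := by
    rw [← Real.rpow_natCast ((2*μs*(lam + 2*μ)) ^ (-(1:ℝ)/2)) 2, ← Real.rpow_mul hcpos.le]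
    norm_num [Real.rpow_neg_one]
  have hs1sq : (2*μs*(lam + 2*μ)) * s₁^2 = -p - Real.sqrt q := by
    rw [hs₁, mul_pow, hrsq, Real.sq_sqrt (by linarith : (0:ℝ) ≤ -p - Real.sqrt q)]
    field_simp
  have hs2sq : (2*μs*(lam + 2*μ)) * s₂^2 = -p + Real.sqrt q := by
    rw [hs₂, mul_pow, hrsq, Real.sq_sqrt (by linarith : (0:ℝ) ≤ -p + Real.sqrt q)]
    field_simp
  have hsq : Real.sqrt q ^ 2 = q := Real.sq_sqrt hq0.le
  have hchar1 : μs*(lam + 2*μ)*s₁^4 + p*s₁^2 + μs*(lam + 2*μ) = 0 := by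
    have hc2 : (2*(2*μs*(lam + 2*μ))) * (μs*(lam + 2*μ)*s₁^4 + p*s₁^2 + μs*(lam + 2*μ)) = 0 := by
      linear_combination ((2*μs*(lam + 2*μ))*s₁^2 + (-p - Real.sqrt q) + 2*p) * hs1sq + hsq + hqpc
    rcases mul_eq_zero.mp hc2 with h' | h'
    · exact absurd h' (by positivity)
    · exact h'
  have hchar2 : μs*(lam + 2*μ)*s₂^4 + p*s₂^2 + μs*(lam + 2*μ) = 0 := by
    have hc2 : (2*(2*μs*(lam + 2*μ))) * (μs*(lam + 2*μ)*s₂^4 + p*s₂^2 + μs*(lam + 2*μ)) = 0 := by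
      linear_combination ((2*μs*(lam + 2*μ))*s₂^2 + (-p + Real.sqrt q) + 2*p) * hs2sq + hsq + hqpc
    rcases mul_eq_zero.mp hc2 with h' | h'
    · exact absurd h' (by positivity)
    · exact h'
  have hY1' : Y₁ * s₁ = (lam + 2*μ)*s₁^2 - μs := by
    rw [hY₁]; field_simp
  have hY2' : Y₂ * s₂ = (lam + 2*μ)*s₂^2 - μs := by
    rw [hY₂]; field_simp
  have hK1₁ : (lam + 2*μ)*Y₁ - μs*Y₁*s₁^2 - (lam + μs)^2*s₁ = 0 := by
    have h : s₁ * ((lam + 2*μ)*Y₁ - μs*Y₁*s₁^2 - (lam + μs)^2*s₁) = 0 := by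
      linear_combination ((lam + 2*μ) - μs*s₁^2) * hY1' - hchar1 + hp * s₁^2
    rcases mul_eq_zero.mp h with h' | h'
    · exact absurd h' hs1pos.ne'
    · exact h'
  have hK1₂ : (lam + 2*μ)*Y₂ - μs*Y₂*s₂^2 - (lam + μs)^2*s₂ = 0 := by
    have h : s₂ * ((lam + 2*μ)*Y₂ - μs*Y₂*s₂^2 - (lam + μs)^2*s₂) = 0 := by
      linear_combination ((lam + 2*μ) - μs*s₂^2) * hY2' - hchar2 + hp * s₂^2
    rcases mul_eq_zero.mp h with h' | h'
    · exact absurd h' hs2pos.ne'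
    · exact h'
  have hK2₁ : (lam + 2*μ)*s₁^2 - μs - Y₁*s₁ = 0 := by linear_combination -hY1'
  have hK2₂ : (lam + 2*μ)*s₂^2 - μs - Y₂*s₂ = 0 := by linear_combination -hY2'
  have ha' : a ≠ 0 := ha.ne'
  -- second derivatives of u₁ in x
  have inner1 : ∀ x : ℝ, x ≠ 0 → deriv (fun t => u₁ t b) x
      = 1 / (2 * Real.pi * Real.sqrt q)
        * (Y₁ * (x/(x^2 + s₁^2*b^2)) - Y₂ * (x/(x^2 + s₂^2*b^2))) := by
    intro x hx
    simp only [hu₁]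
    exact (((hdLSx (s₁^2*b^2) x (by positivity) (by positivity)).const_mul Y₁).sub
      ((hdLSx (s₂^2*b^2) x (by positivity) (by positivity)).const_mul Y₂)).const_mul
        (1 / (2 * Real.pi * Real.sqrt q)) |>.deriv
  have E1a : deriv (fun x => deriv (fun t => u₁ t b) x) a
      = 1 / (2 * Real.pi * Real.sqrt q)
        * (Y₁ * ((s₁^2*b^2 - a^2)/(a^2 + s₁^2*b^2)^2)
          - Y₂ * ((s₂^2*b^2 - a^2)/(a^2 + s₂^2*b^2)^2)) := by
    have hev : (fun x => deriv (fun t => u₁ t b) x) =ᶠ[nhds a]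
        (fun x => 1 / (2 * Real.pi * Real.sqrt q)
          * (Y₁ * (x/(x^2 + s₁^2*b^2)) - Y₂ * (x/(x^2 + s₂^2*b^2)))) := by
      filter_upwards [Ioi_mem_nhds ha] with x hx
      exact inner1 x (ne_of_gt hx)
    rw [hev.deriv_eq]
    exact (((hdD1 (s₁^2*b^2) a (by positivity)).const_mul Y₁).sub
      ((hdD1 (s₂^2*b^2) a (by positivity)).const_mul Y₂)).const_mul
        (1 / (2 * Real.pi * Real.sqrt q)) |>.deriv
  -- second derivative of u₁ in y
  have inner2 : ∀ y : ℝ, deriv (fun t => u₁ a t) y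
      = 1 / (2 * Real.pi * Real.sqrt q)
        * (Y₁ * (s₁^2*y/(a^2 + s₁^2*y^2)) - Y₂ * (s₂^2*y/(a^2 + s₂^2*y^2))) := by
    intro y
    simp only [hu₁]
    exact (((hdLSy (a^2) s₁ y (by positivity) (by positivity)).const_mul Y₁).sub
      ((hdLSy (a^2) s₂ y (by positivity) (by positivity)).const_mul Y₂)).const_mul
        (1 / (2 * Real.pi * Real.sqrt q)) |>.deriv
  have E1b : deriv (fun y => deriv (fun t => u₁ a t) y) b
      = 1 / (2 * Real.pi * Real.sqrt q)
        * (Y₁ * (s₁^2*(a^2 - s₁^2*b^2)/(a^2 + s₁^2*b^2)^2)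
          - Y₂ * (s₂^2*(a^2 - s₂^2*b^2)/(a^2 + s₂^2*b^2)^2)) := by
    have hfe : (fun y => deriv (fun t => u₁ a t) y)
        = (fun y => 1 / (2 * Real.pi * Real.sqrt q)
          * (Y₁ * (s₁^2*y/(a^2 + s₁^2*y^2)) - Y₂ * (s₂^2*y/(a^2 + s₂^2*y^2)))) :=
      funext inner2
    rw [hfe]
    exact (((hdD2 (a^2) s₁ b (by positivity)).const_mul Y₁).sub
      ((hdD2 (a^2) s₂ b (by positivity)).const_mul Y₂)).const_mul
        (1 / (2 * Real.pi * Real.sqrt q)) |>.deriv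
  -- mixed derivative of u₂ (eq1)
  have inner3 : ∀ x : ℝ, x ≠ 0 → deriv (fun y => u₂ x y) b
      = (lam + μs) / (2 * Real.pi * Real.sqrt q)
        * (s₂*x/(x^2 + s₂^2*b^2) - s₁*x/(x^2 + s₁^2*b^2)) := by
    intro x hx
    simp only [hu₂]
    exact ((hdTy s₂ x b hx).sub (hdTy s₁ x b hx)).const_mul
      ((lam + μs) / (2 * Real.pi * Real.sqrt q)) |>.deriv
  have E1c : deriv (fun x => deriv (fun y => u₂ x y) b) a
      = (lam + μs) / (2 * Real.pi * Real.sqrt q)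
        * (s₂*(s₂^2*b^2 - a^2)/(a^2 + s₂^2*b^2)^2 - s₁*(s₁^2*b^2 - a^2)/(a^2 + s₁^2*b^2)^2) := by
    have hev : (fun x => deriv (fun y => u₂ x y) b) =ᶠ[nhds a]
        (fun x => (lam + μs) / (2 * Real.pi * Real.sqrt q)
          * (s₂*x/(x^2 + s₂^2*b^2) - s₁*x/(x^2 + s₁^2*b^2))) := by
      filter_upwards [Ioi_mem_nhds ha] with x hx
      exact inner3 x (ne_of_gt hx)
    rw [hev.deriv_eq]
    exact ((hdD4 s₂ (s₂^2*b^2) a (by positivity)).sub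
      (hdD4 s₁ (s₁^2*b^2) a (by positivity))).const_mul
        ((lam + μs) / (2 * Real.pi * Real.sqrt q)) |>.deriv
  -- second derivative of u₂ in y
  have inner4 : ∀ y : ℝ, deriv (fun t => u₂ a t) y
      = (lam + μs) / (2 * Real.pi * Real.sqrt q)
        * (s₂*a/(a^2 + s₂^2*y^2) - s₁*a/(a^2 + s₁^2*y^2)) := by
    intro y
    simp only [hu₂]
    exact ((hdTy s₂ a y ha').sub (hdTy s₁ a y ha')).const_mul
      ((lam + μs) / (2 * Real.pi * Real.sqrt q)) |>.deriv
  have E2a : deriv (fun y => deriv (fun t => u₂ a t) y) b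
      = (lam + μs) / (2 * Real.pi * Real.sqrt q)
        * (-(s₂*a*(2*s₂^2*b))/(a^2 + s₂^2*b^2)^2 - -(s₁*a*(2*s₁^2*b))/(a^2 + s₁^2*b^2)^2) := by
    have hfe : (fun y => deriv (fun t => u₂ a t) y)
        = (fun y => (lam + μs) / (2 * Real.pi * Real.sqrt q)
          * (s₂*a/(a^2 + s₂^2*y^2) - s₁*a/(a^2 + s₁^2*y^2))) := funext inner4
    rw [hfe]
    exact ((hdD5 (s₂*a) (a^2) s₂ b (by positivity)).sub
      (hdD5 (s₁*a) (a^2) s₁ b (by positivity))).const_mul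
        ((lam + μs) / (2 * Real.pi * Real.sqrt q)) |>.deriv
  -- second derivative of u₂ in x
  have inner5 : ∀ x : ℝ, x ≠ 0 → deriv (fun t => u₂ t b) x
      = (lam + μs) / (2 * Real.pi * Real.sqrt q)
        * (-(s₂*b)/(x^2 + s₂^2*b^2) - -(s₁*b)/(x^2 + s₁^2*b^2)) := by
    intro x hx
    simp only [hu₂]
    exact ((hdTx s₂ b x hx).sub (hdTx s₁ b x hx)).const_mul
      ((lam + μs) / (2 * Real.pi * Real.sqrt q)) |>.deriv
  have E2b : deriv (fun x => deriv (fun t => u₂ t b) x) a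
      = (lam + μs) / (2 * Real.pi * Real.sqrt q)
        * (-(-(s₂*b)*(2*a))/(a^2 + s₂^2*b^2)^2 - -(-(s₁*b)*(2*a))/(a^2 + s₁^2*b^2)^2) := by
    have hev : (fun x => deriv (fun t => u₂ t b) x) =ᶠ[nhds a]
        (fun x => (lam + μs) / (2 * Real.pi * Real.sqrt q)
          * (-(s₂*b)/(x^2 + s₂^2*b^2) - -(s₁*b)/(x^2 + s₁^2*b^2))) := by
      filter_upwards [Ioi_mem_nhds ha] with x hx
      exact inner5 x (ne_of_gt hx)
    rw [hev.deriv_eq]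
    exact ((hdD3 (-(s₂*b)) (s₂^2*b^2) a (by positivity)).sub
      (hdD3 (-(s₁*b)) (s₁^2*b^2) a (by positivity))).const_mul
        ((lam + μs) / (2 * Real.pi * Real.sqrt q)) |>.deriv
  -- mixed derivative of u₁ (eq2)
  have inner6 : ∀ x : ℝ, x ≠ 0 → deriv (fun y => u₁ x y) b
      = 1 / (2 * Real.pi * Real.sqrt q)
        * (Y₁ * (s₁^2*b/(x^2 + s₁^2*b^2)) - Y₂ * (s₂^2*b/(x^2 + s₂^2*b^2))) := by
    intro x hx
    simp only [hu₁]
    exact (((hdLSy (x^2) s₁ b (by positivity) (by positivity)).const_mul Y₁).sub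
      ((hdLSy (x^2) s₂ b (by positivity) (by positivity)).const_mul Y₂)).const_mul
        (1 / (2 * Real.pi * Real.sqrt q)) |>.deriv
  have E2c : deriv (fun x => deriv (fun y => u₁ x y) b) a
      = 1 / (2 * Real.pi * Real.sqrt q)
        * (Y₁ * (-(s₁^2*b*(2*a))/(a^2 + s₁^2*b^2)^2) - Y₂ * (-(s₂^2*b*(2*a))/(a^2 + s₂^2*b^2)^2)) := by
    have hev : (fun x => deriv (fun y => u₁ x y) b) =ᶠ[nhds a]
        (fun x => 1 / (2 * Real.pi * Real.sqrt q)
          * (Y₁ * (s₁^2*b/(x^2 + s₁^2*b^2)) - Y₂ * (s₂^2*b/(x^2 + s₂^2*b^2)))) := by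
      filter_upwards [Ioi_mem_nhds ha] with x hx
      exact inner6 x (ne_of_gt hx)
    rw [hev.deriv_eq]
    exact (((hdD3 (s₁^2*b) (s₁^2*b^2) a (by positivity)).const_mul Y₁).sub
      ((hdD3 (s₂^2*b) (s₂^2*b^2) a (by positivity)).const_mul Y₂)).const_mul
        (1 / (2 * Real.pi * Real.sqrt q)) |>.deriv
  constructor
  · rw [E1a, E1b, E1c]
    linear_combination
      (1 / (2 * Real.pi * Real.sqrt q) * ((s₁^2*b^2 - a^2)/(a^2 + s₁^2*b^2)^2)) * hK1₁
      - (1 / (2 * Real.pi * Real.sqrt q) * ((s₂^2*b^2 - a^2)/(a^2 + s₂^2*b^2)^2)) * hK1₂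
  · rw [E2a, E2b, E2c]
    linear_combination
      ((lam + μs) * (1 / (2 * Real.pi * Real.sqrt q)) * (2*a*b*s₁/(a^2 + s₁^2*b^2)^2)) * hK2₁
      - ((lam + μs) * (1 / (2 * Real.pi * Real.sqrt q)) * (2*a*b*s₂/(a^2 + s₂^2*b^2)^2)) * hK2₂
end

section
/- Let λ, μ, μ* ∈ ℝ with 0 < μ* < μ and λ + μ > 0. Define p = 2λμ* − 4μ(λ+μ), q = 16μ(μ−μ*)(λ+μ)(λ+μ+μ*), s_m = (2μ*(λ+2μ))^(−1/2)·√(−p ∓ √q) (m = 1,2), Y_m^(1) = ((λ+2μ)s_m² − μ*)/s_m, Y_m^(2) = (μ* s_m² − (λ+2μ))/s_m, r_m² = x₁² + s_m² x₂², and set u₁(x₁,x₂) = −(x₂/(4π√q))·((λ+μ*)(s₁/r₁² − s₂/r₂²) − (Y₁^(1) − Y₂^(1))s₁²/r₁²) − (Y₂^(1)/(4πμ*(λ+2μ)))·x₁²x₂/(r₁²r₂²), u₂(x₁,x₂) = (x₁/(4π√q))·(((λ+μ*)s₂ + Y₂^(2))/r₂² − ((λ+μ*)s₁ + Y₁^(2))/r₁²).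 Then u = (u₁,u₂) satisfies the cubic plane strain equilibrium equations with zero body force on ℝ² ∖ {0}: (λ+2μ)·∂²u₁/∂x₁² + μ*·∂²u₁/∂x₂² + (λ+μ*)·∂²u₂/∂x₁∂x₂ = 0 and (λ+2μ)·∂²u₂/∂x₂² + μ*·∂²u₂/∂x₁² + (λ+μ*)·∂²u₁/∂x₁∂x₂ = 0. -/
private lemma den_ne' (s x y : ℝ) (hs : s ≠ 0) (hxy : ¬(x = 0 ∧ y = 0)) :
    x^2 + s^2*y^2 ≠ 0 := by
  rcases not_and_or.mp hxy with h | h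
  · have : 0 < x^2 + s^2*y^2 := by positivity
    exact this.ne'
  · have : 0 < x^2 + s^2*y^2 := by positivity
    exact this.ne'

private lemma dDen (k x : ℝ) : HasDerivAt (fun t : ℝ => t^2 + k) (2*x) x := by
  simpa using (hasDerivAt_pow 2 x).add_const k

private lemma dDen2 (k s y : ℝ) : HasDerivAt (fun t : ℝ => k + s^2*t^2) (2*s^2*y) y := by
  exact (((hasDerivAt_pow 2 y).const_mul (s^2)).const_add k).congr_deriv (by push_cast; ring)

private lemma dA1 (c k x : ℝ) (h : x^2 + k ≠ 0) :
    HasDerivAt (fun t : ℝ => c / (t^2 + k)) (-(2*x*c) / (x^2+k)^2) x := by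
  have h0 := (hasDerivAt_const x c).fun_div (dDen k x) h
  refine h0.congr_deriv ?_
  ring

private lemma dA2 (c k x : ℝ) (h : x^2 + k ≠ 0) :
    HasDerivAt (fun t : ℝ => -(2*t*c) / (t^2+k)^2) ((6*x^2-2*k)*c/(x^2+k)^3) x := by
  have hnum : HasDerivAt (fun t : ℝ => -(2*t*c)) (-(2*c)) x := by
    have := ((hasDerivAt_id x).const_mul (2:ℝ)).mul_const c
    simpa using this.fun_neg
  have hden : HasDerivAt (fun t : ℝ => (t^2+k)^2) ((2:ℕ)*(x^2+k)^(2-1)*(2*x)) x :=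
    (dDen k x).pow 2
  have h0 := hnum.fun_div hden (pow_ne_zero 2 h)
  refine h0.congr_deriv ?_
  field_simp
  ring

private lemma dA3 (c k s y : ℝ) (h : k + s^2*y^2 ≠ 0) :
    HasDerivAt (fun t : ℝ => c*t/(k+s^2*t^2)) (c*(k-s^2*y^2)/(k+s^2*y^2)^2) y := by
  have hnum : HasDerivAt (fun t : ℝ => c*t) c y := by
    simpa using (hasDerivAt_id y).const_mul c
  have h0 := hnum.fun_div (dDen2 k s y) h
  refine h0.congr_deriv ?_
  field_simp
  ring

private lemma dA4 (c k s y : ℝ) (h : k + s^2*y^2 ≠ 0) :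
    HasDerivAt (fun t : ℝ => c*(k-s^2*t^2)/(k+s^2*t^2)^2)
      (-(2*c*s^2*y*(3*k-s^2*y^2))/(k+s^2*y^2)^3) y := by
  have hnum : HasDerivAt (fun t : ℝ => c*(k-s^2*t^2)) (c*(-(2*s^2*y))) y := by
    have h1 : HasDerivAt (fun t : ℝ => k-s^2*t^2) (-(2*s^2*y)) y :=
      ((((hasDerivAt_pow 2 y).const_mul (s^2)).const_sub k)).congr_deriv (by push_cast; ring)
    simpa using h1.const_mul c
  have hden : HasDerivAt (fun t : ℝ => (k+s^2*t^2)^2) ((2:ℕ)*(k+s^2*y^2)^(2-1)*(2*s^2*y)) y :=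
    (dDen2 k s y).pow 2
  have h0 := hnum.fun_div hden (pow_ne_zero 2 h)
  refine h0.congr_deriv ?_
  field_simp
  ring

private lemma dA5 (c k s y : ℝ) (h : k + s^2*y^2 ≠ 0) :
    HasDerivAt (fun t : ℝ => c/(k+s^2*t^2)) (-(2*s^2*y*c)/(k+s^2*y^2)^2) y := by
  have h0 := (hasDerivAt_const y c).fun_div (dDen2 k s y) h
  refine h0.congr_deriv ?_
  ring

private lemma dA6 (c k s y : ℝ) (h : k + s^2*y^2 ≠ 0) :
    HasDerivAt (fun t : ℝ => -(2*s^2*t*c)/(k+s^2*t^2)^2)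
      (-(2*s^2*c*(k-3*s^2*y^2))/(k+s^2*y^2)^3) y := by
  have hnum : HasDerivAt (fun t : ℝ => -(2*s^2*t*c)) (-(2*s^2*c)) y := by
    have := ((hasDerivAt_id y).const_mul (2*s^2)).mul_const c
    simpa [mul_assoc] using this.fun_neg
  have hden : HasDerivAt (fun t : ℝ => (k+s^2*t^2)^2) ((2:ℕ)*(k+s^2*y^2)^(2-1)*(2*s^2*y)) y :=
    (dDen2 k s y).pow 2
  have h0 := hnum.fun_div hden (pow_ne_zero 2 h)
  refine h0.congr_deriv ?_
  field_simp
  ring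

private lemma dA7 (c k x : ℝ) (h : x^2 + k ≠ 0) :
    HasDerivAt (fun t : ℝ => c*t/(t^2+k)) (c*(k-x^2)/(x^2+k)^2) x := by
  have hnum : HasDerivAt (fun t : ℝ => c*t) c x := by
    simpa using (hasDerivAt_id x).const_mul c
  have h0 := hnum.fun_div (dDen k x) h
  refine h0.congr_deriv ?_
  field_simp
  ring

private lemma dA8 (c k x : ℝ) (h : x^2 + k ≠ 0) :
    HasDerivAt (fun t : ℝ => c*(k-t^2)/(t^2+k)^2) (2*c*x*(x^2-3*k)/(x^2+k)^3) x := by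
  have hnum : HasDerivAt (fun t : ℝ => c*(k-t^2)) (c*(-(2*x))) x := by
    have h1 : HasDerivAt (fun t : ℝ => k-t^2) (-(2*x)) x := by
      simpa using ((hasDerivAt_pow 2 x).const_sub k)
    simpa using h1.const_mul c
  have hden : HasDerivAt (fun t : ℝ => (t^2+k)^2) ((2:ℕ)*(x^2+k)^(2-1)*(2*x)) x :=
    (dDen k x).pow 2
  have h0 := hnum.fun_div hden (pow_ne_zero 2 h)
  refine h0.congr_deriv ?_
  field_simp
  ring

private lemma dA9 (c m x : ℝ) (h : x^2 + m ≠ 0) :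
    HasDerivAt (fun t : ℝ => c*(t^2-m)/(t^2+m)^2) (-(2*c*x*(x^2-3*m))/(x^2+m)^3) x := by
  have hnum : HasDerivAt (fun t : ℝ => c*(t^2-m)) (c*(2*x)) x := by
    have h1 : HasDerivAt (fun t : ℝ => t^2-m) (2*x) x := by
      simpa using ((hasDerivAt_pow 2 x).sub_const m)
    simpa using h1.const_mul c
  have hden : HasDerivAt (fun t : ℝ => (t^2+m)^2) ((2:ℕ)*(x^2+m)^(2-1)*(2*x)) x :=
    (dDen m x).pow 2
  have h0 := hnum.fun_div hden (pow_ne_zero 2 h)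
  refine h0.congr_deriv ?_
  field_simp
  ring
private lemma aux_pde (lam μ μs s₁ s₂ α₁ α₂ β₁ β₂ : ℝ)
    (hs₁0 : s₁ ≠ 0) (hs₂0 : s₂ ≠ 0)
    (hC1₁ : (lam+2*μ)*α₁ + s₁^2*((lam+μs)*β₁ - μs*α₁) = 0)
    (hC1₂ : (lam+2*μ)*α₂ + s₂^2*((lam+μs)*β₂ - μs*α₂) = 0)
    (hC2₁ : μs*β₁ - (lam+2*μ)*s₁^2*β₁ - (lam+μs)*α₁ = 0)
    (hC2₂ : μs*β₂ - (lam+2*μ)*s₂^2*β₂ - (lam+μs)*α₂ = 0)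
    (u₁ u₂ : ℝ → ℝ → ℝ)
    (hu₁ : u₁ = fun x y => α₁*y/(x^2+s₁^2*y^2) + α₂*y/(x^2+s₂^2*y^2))
    (hu₂ : u₂ = fun x y => β₁*x/(x^2+s₁^2*y^2) + β₂*x/(x^2+s₂^2*y^2)) :
    ∀ a b : ℝ, (a, b) ≠ (0, 0) →
      (lam + 2*μ) * deriv (fun x => deriv (fun t => u₁ t b) x) a
          + μs * deriv (fun y => deriv (fun t => u₁ a t) y) b
          + (lam + μs) * deriv (fun x => deriv (fun y => u₂ x y) b) a = 0
      ∧ (lam + 2*μ) * deriv (fun y => deriv (fun t => u₂ a t) y) b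
          + μs * deriv (fun x => deriv (fun t => u₂ t b) x) a
          + (lam + μs) * deriv (fun x => deriv (fun y => u₁ x y) b) a = 0 := by
  intro a b hab
  have hab' : ¬(a = 0 ∧ b = 0) := by simpa [Prod.ext_iff] using hab
  have hr₁ : a^2 + s₁^2*b^2 ≠ 0 := den_ne' s₁ a b hs₁0 hab'
  have hr₂ : a^2 + s₂^2*b^2 ≠ 0 := den_ne' s₂ a b hs₂0 hab'
  have hx_ev : ∀ᶠ x in nhds a, x^2+s₁^2*b^2 ≠ 0 ∧ x^2+s₂^2*b^2 ≠ 0 := by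
    have c1 : ContinuousAt (fun x : ℝ => x^2+s₁^2*b^2) a := by fun_prop
    have c2 : ContinuousAt (fun x : ℝ => x^2+s₂^2*b^2) a := by fun_prop
    exact (c1.eventually_ne hr₁).and (c2.eventually_ne hr₂)
  have hy_ev : ∀ᶠ y in nhds b, a^2+s₁^2*y^2 ≠ 0 ∧ a^2+s₂^2*y^2 ≠ 0 := by
    have c1 : ContinuousAt (fun y : ℝ => a^2+s₁^2*y^2) b := by fun_prop
    have c2 : ContinuousAt (fun y : ℝ => a^2+s₂^2*y^2) b := by fun_prop
    exact (c1.eventually_ne hr₁).and (c2.eventually_ne hr₂)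
  simp only [hu₁, hu₂]
  have h11 : deriv (fun x => deriv (fun t => α₁*b/(t^2+s₁^2*b^2) + α₂*b/(t^2+s₂^2*b^2)) x) a
      = (6*a^2-2*(s₁^2*b^2))*(α₁*b)/(a^2+s₁^2*b^2)^3
        + (6*a^2-2*(s₂^2*b^2))*(α₂*b)/(a^2+s₂^2*b^2)^3 := by
    have hev : (fun x => deriv (fun t => α₁*b/(t^2+s₁^2*b^2) + α₂*b/(t^2+s₂^2*b^2)) x)
        =ᶠ[nhds a] (fun x => -(2*x*(α₁*b))/(x^2+s₁^2*b^2)^2 + -(2*x*(α₂*b))/(x^2+s₂^2*b^2)^2) := by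
      filter_upwards [hx_ev] with x hx
      exact ((dA1 (α₁*b) (s₁^2*b^2) x hx.1).add (dA1 (α₂*b) (s₂^2*b^2) x hx.2)).deriv
    rw [hev.deriv_eq]
    exact ((dA2 (α₁*b) (s₁^2*b^2) a hr₁).add (dA2 (α₂*b) (s₂^2*b^2) a hr₂)).deriv
  have h12 : deriv (fun y => deriv (fun t => α₁*t/(a^2+s₁^2*t^2) + α₂*t/(a^2+s₂^2*t^2)) y) b
      = -(2*α₁*s₁^2*b*(3*a^2-s₁^2*b^2))/(a^2+s₁^2*b^2)^3
        + -(2*α₂*s₂^2*b*(3*a^2-s₂^2*b^2))/(a^2+s₂^2*b^2)^3 := by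
    have hev : (fun y => deriv (fun t => α₁*t/(a^2+s₁^2*t^2) + α₂*t/(a^2+s₂^2*t^2)) y)
        =ᶠ[nhds b] (fun y => α₁*(a^2-s₁^2*y^2)/(a^2+s₁^2*y^2)^2
          + α₂*(a^2-s₂^2*y^2)/(a^2+s₂^2*y^2)^2) := by
      filter_upwards [hy_ev] with y hy
      exact ((dA3 α₁ (a^2) s₁ y hy.1).add (dA3 α₂ (a^2) s₂ y hy.2)).deriv
    rw [hev.deriv_eq]
    exact ((dA4 α₁ (a^2) s₁ b hr₁).add (dA4 α₂ (a^2) s₂ b hr₂)).deriv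
  have h13 : deriv (fun x => deriv (fun y => β₁*x/(x^2+s₁^2*y^2) + β₂*x/(x^2+s₂^2*y^2)) b) a
      = (6*a^2-2*(s₁^2*b^2))*(s₁^2*b*β₁)/(a^2+s₁^2*b^2)^3
        + (6*a^2-2*(s₂^2*b^2))*(s₂^2*b*β₂)/(a^2+s₂^2*b^2)^3 := by
    have hev : (fun x => deriv (fun y => β₁*x/(x^2+s₁^2*y^2) + β₂*x/(x^2+s₂^2*y^2)) b)
        =ᶠ[nhds a] (fun x => -(2*x*(s₁^2*b*β₁))/(x^2+s₁^2*b^2)^2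
          + -(2*x*(s₂^2*b*β₂))/(x^2+s₂^2*b^2)^2) := by
      filter_upwards [hx_ev] with x hx
      rw [((dA5 (β₁*x) (x^2) s₁ b hx.1).fun_add (dA5 (β₂*x) (x^2) s₂ b hx.2)).deriv]
      ring
    rw [hev.deriv_eq]
    exact ((dA2 (s₁^2*b*β₁) (s₁^2*b^2) a hr₁).add (dA2 (s₂^2*b*β₂) (s₂^2*b^2) a hr₂)).deriv
  have h21 : deriv (fun y => deriv (fun t => β₁*a/(a^2+s₁^2*t^2) + β₂*a/(a^2+s₂^2*t^2)) y) b
      = -(2*s₁^2*(β₁*a)*(a^2-3*s₁^2*b^2))/(a^2+s₁^2*b^2)^3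
        + -(2*s₂^2*(β₂*a)*(a^2-3*s₂^2*b^2))/(a^2+s₂^2*b^2)^3 := by
    have hev : (fun y => deriv (fun t => β₁*a/(a^2+s₁^2*t^2) + β₂*a/(a^2+s₂^2*t^2)) y)
        =ᶠ[nhds b] (fun y => -(2*s₁^2*y*(β₁*a))/(a^2+s₁^2*y^2)^2
          + -(2*s₂^2*y*(β₂*a))/(a^2+s₂^2*y^2)^2) := by
      filter_upwards [hy_ev] with y hy
      exact ((dA5 (β₁*a) (a^2) s₁ y hy.1).add (dA5 (β₂*a) (a^2) s₂ y hy.2)).deriv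
    rw [hev.deriv_eq]
    have := ((dA6 (β₁*a) (a^2) s₁ b hr₁).fun_add (dA6 (β₂*a) (a^2) s₂ b hr₂)).deriv
    rw [this]
  have h22 : deriv (fun x => deriv (fun t => β₁*t/(t^2+s₁^2*b^2) + β₂*t/(t^2+s₂^2*b^2)) x) a
      = 2*β₁*a*(a^2-3*(s₁^2*b^2))/(a^2+s₁^2*b^2)^3
        + 2*β₂*a*(a^2-3*(s₂^2*b^2))/(a^2+s₂^2*b^2)^3 := by
    have hev : (fun x => deriv (fun t => β₁*t/(t^2+s₁^2*b^2) + β₂*t/(t^2+s₂^2*b^2)) x)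
        =ᶠ[nhds a] (fun x => β₁*(s₁^2*b^2-x^2)/(x^2+s₁^2*b^2)^2
          + β₂*(s₂^2*b^2-x^2)/(x^2+s₂^2*b^2)^2) := by
      filter_upwards [hx_ev] with x hx
      exact ((dA7 β₁ (s₁^2*b^2) x hx.1).add (dA7 β₂ (s₂^2*b^2) x hx.2)).deriv
    rw [hev.deriv_eq]
    exact ((dA8 β₁ (s₁^2*b^2) a hr₁).add (dA8 β₂ (s₂^2*b^2) a hr₂)).deriv
  have h23 : deriv (fun x => deriv (fun y => α₁*y/(x^2+s₁^2*y^2) + α₂*y/(x^2+s₂^2*y^2)) b) a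
      = -(2*α₁*a*(a^2-3*(s₁^2*b^2)))/(a^2+s₁^2*b^2)^3
        + -(2*α₂*a*(a^2-3*(s₂^2*b^2)))/(a^2+s₂^2*b^2)^3 := by
    have hev : (fun x => deriv (fun y => α₁*y/(x^2+s₁^2*y^2) + α₂*y/(x^2+s₂^2*y^2)) b)
        =ᶠ[nhds a] (fun x => α₁*(x^2-s₁^2*b^2)/(x^2+s₁^2*b^2)^2
          + α₂*(x^2-s₂^2*b^2)/(x^2+s₂^2*b^2)^2) := by
      filter_upwards [hx_ev] with x hx
      rw [((dA3 α₁ (x^2) s₁ b hx.1).fun_add (dA3 α₂ (x^2) s₂ b hx.2)).deriv]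
    rw [hev.deriv_eq]
    exact ((dA9 α₁ (s₁^2*b^2) a hr₁).add (dA9 α₂ (s₂^2*b^2) a hr₂)).deriv
  constructor
  · rw [h11, h12, h13]
    linear_combination (2*b*(3*a^2-s₁^2*b^2)/(a^2+s₁^2*b^2)^3) * hC1₁
      + (2*b*(3*a^2-s₂^2*b^2)/(a^2+s₂^2*b^2)^3) * hC1₂
  · rw [h21, h22, h23]
    linear_combination (2*a*(a^2-3*s₁^2*b^2)/(a^2+s₁^2*b^2)^3) * hC2₁
      + (2*a*(a^2-3*s₂^2*b^2)/(a^2+s₂^2*b^2)^3) * hC2₂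

set_option maxHeartbeats 2000000 in
/-- The concentrated-couple displacement field in a cubic plane strain material
(`0 < μ* < μ`, `λ + μ > 0`) satisfies the cubic equilibrium equations with zero
body force on `ℝ² ∖ {0}`. -/
theorem concentrated_couple_cubic_equilibrium (lam μ μs : ℝ)
    (hμs : 0 < μs) (hμ : μs < μ) (hlm : 0 < lam + μ)
    (p q s₁ s₂ Y₁₁ Y₂₁ Y₁₂ Y₂₂ : ℝ) (u₁ u₂ : ℝ → ℝ → ℝ)
    (hp : p = 2*lam*μs - 4*μ*(lam + μ))
    (hq : q = 16*μ*(μ - μs)*(lam + μ)*(lam + μ + μs))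
    (hs₁ : s₁ = (2*μs*(lam + 2*μ)) ^ (-(1:ℝ)/2) * Real.sqrt (-p - Real.sqrt q))
    (hs₂ : s₂ = (2*μs*(lam + 2*μ)) ^ (-(1:ℝ)/2) * Real.sqrt (-p + Real.sqrt q))
    (hY₁₁ : Y₁₁ = ((lam + 2*μ) * s₁^2 - μs) / s₁)
    (hY₂₁ : Y₂₁ = ((lam + 2*μ) * s₂^2 - μs) / s₂)
    (hY₁₂ : Y₁₂ = (μs * s₁^2 - (lam + 2*μ)) / s₁)
    (hY₂₂ : Y₂₂ = (μs * s₂^2 - (lam + 2*μ)) / s₂)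
    (hu₁ : u₁ = fun x₁ x₂ =>
        -(x₂ / (4 * Real.pi * Real.sqrt q))
            * ((lam + μs) * (s₁ / (x₁^2 + s₁^2 * x₂^2) - s₂ / (x₁^2 + s₂^2 * x₂^2))
                - (Y₁₁ - Y₂₁) * s₁^2 / (x₁^2 + s₁^2 * x₂^2))
          - Y₂₁ / (4 * Real.pi * μs * (lam + 2*μ))
            * (x₁^2 * x₂ / ((x₁^2 + s₁^2 * x₂^2) * (x₁^2 + s₂^2 * x₂^2))))
    (hu₂ : u₂ = fun x₁ x₂ =>
        x₁ / (4 * Real.pi * Real.sqrt q)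
          * (((lam + μs) * s₂ + Y₂₂) / (x₁^2 + s₂^2 * x₂^2)
              - ((lam + μs) * s₁ + Y₁₂) / (x₁^2 + s₁^2 * x₂^2))) :
    ∀ a b : ℝ, (a, b) ≠ (0, 0) →
      (lam + 2*μ) * deriv (fun x => deriv (fun t => u₁ t b) x) a
          + μs * deriv (fun y => deriv (fun t => u₁ a t) y) b
          + (lam + μs) * deriv (fun x => deriv (fun y => u₂ x y) b) a = 0
      ∧ (lam + 2*μ) * deriv (fun y => deriv (fun t => u₂ a t) y) b
          + μs * deriv (fun x => deriv (fun t => u₂ t b) x) a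
          + (lam + μs) * deriv (fun x => deriv (fun y => u₁ x y) b) a = 0 := by
  have hμ0 : (0:ℝ) < μ := hμs.trans hμ
  have hT : (0:ℝ) < lam + 2*μ := by linarith
  have hq0 : (0:ℝ) < q := by
    rw [hq]
    have h1 : (0:ℝ) < 16*μ := by linarith
    have h2 : (0:ℝ) < 16*μ*(μ-μs) := mul_pos h1 (by linarith)
    have h3 : (0:ℝ) < 16*μ*(μ-μs)*(lam+μ) := mul_pos h2 hlm
    exact mul_pos h3 (by linarith)
  have hsq0 : (0:ℝ) < Real.sqrt q := Real.sqrt_pos.mpr hq0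
  have hsqq : Real.sqrt q ^ 2 = q := Real.sq_sqrt hq0.le
  have hmp : (0:ℝ) < -p := by
    rw [hp]
    nlinarith [mul_pos (show (0:ℝ) < 4*μ-2*μs by linarith) hlm, mul_pos hμs hμ0]
  have hdisc : p^2 - q = 4*μs^2*(lam+2*μ)^2 := by rw [hp, hq]; ring
  have hA2pos : (0:ℝ) < 4*μs^2*(lam+2*μ)^2 := by positivity
  have hsqlt : Real.sqrt q < -p := by
    nlinarith [hsqq, Real.sqrt_nonneg q, hdisc, hA2pos, hmp]
  have h2A : (0:ℝ) < 2*μs*(lam+2*μ) := by positivity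
  have hrpow : ((2*μs*(lam+2*μ)) ^ (-(1:ℝ)/2))^2 = (2*μs*(lam+2*μ))⁻¹ := by
    rw [← Real.rpow_natCast ((2*μs*(lam+2*μ)) ^ (-(1:ℝ)/2)) 2, ← Real.rpow_mul h2A.le]
    norm_num [Real.rpow_neg_one]
  have hs1sq : 2*μs*(lam+2*μ)*s₁^2 = -p - Real.sqrt q := by
    rw [hs₁, mul_pow, hrpow, Real.sq_sqrt (by linarith : (0:ℝ) ≤ -p - Real.sqrt q)]
    field_simp
  have hs2sq : 2*μs*(lam+2*μ)*s₂^2 = -p + Real.sqrt q := by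
    rw [hs₂, mul_pow, hrpow, Real.sq_sqrt (by linarith : (0:ℝ) ≤ -p + Real.sqrt q)]
    field_simp
  have hs1pos : (0:ℝ) < s₁ := by
    rw [hs₁]
    exact mul_pos (Real.rpow_pos_of_pos h2A _) (Real.sqrt_pos.mpr (by linarith))
  have hs2pos : (0:ℝ) < s₂ := by
    rw [hs₂]
    exact mul_pos (Real.rpow_pos_of_pos h2A _) (Real.sqrt_pos.mpr (by linarith))
  have hσeq : Real.sqrt q = μs*(lam+2*μ)*(s₂^2-s₁^2) := by
    linear_combination (hs1sq - hs2sq)/2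
  have hΔ : (0:ℝ) < s₂^2-s₁^2 := by
    have h1 : s₂^2-s₁^2 = Real.sqrt q / (μs*(lam+2*μ)) := by
      rw [hσeq]; field_simp
    rw [h1]; exact div_pos hsq0 (mul_pos hμs hT)
  have h4 : (2*μs*(lam+2*μ))^2*(s₁^2*s₂^2) = (2*μs*(lam+2*μ))^2 := by
    linear_combination (2*μs*(lam+2*μ)*s₂^2)*hs1sq + (-p - Real.sqrt q)*hs2sq - hsqq + hdisc
  have hprod : s₁^2*s₂^2 = 1 :=
    mul_left_cancel₀ (by positivity : ((2*μs*(lam+2*μ))^2 : ℝ) ≠ 0)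
      (by rw [mul_one]; exact h4)
  have hsum : μs*(lam+2*μ)*(s₁^2+s₂^2) = -p := by linear_combination (hs1sq + hs2sq)/2
  have hchar₁ : μs*(lam+2*μ)*s₁^4 + (2*lam*μs-4*μ*(lam+μ))*s₁^2 + μs*(lam+2*μ) = 0 := by
    linear_combination s₁^2*hsum - μs*(lam+2*μ)*hprod - s₁^2*hp
  have hchar₂ : μs*(lam+2*μ)*s₂^4 + (2*lam*μs-4*μ*(lam+μ))*s₂^2 + μs*(lam+2*μ) = 0 := by
    linear_combination s₂^2*hsum - μs*(lam+2*μ)*hprod - s₂^2*hp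
  have hπ := Real.pi_ne_zero
  have hC1₁ : (lam+2*μ)*(((lam+2*μ)*s₁^3 - (lam+2*μs)*s₁)/(4*Real.pi*(μs*(lam+2*μ)*(s₂^2-s₁^2)))) + s₁^2*((lam+μs)*(((lam+2*μ) - (lam+2*μs)*s₁^2)/(s₁*(4*Real.pi*(μs*(lam+2*μ)*(s₂^2-s₁^2))))) - μs*(((lam+2*μ)*s₁^3 - (lam+2*μs)*s₁)/(4*Real.pi*(μs*(lam+2*μ)*(s₂^2-s₁^2))))) = 0 := by
    linear_combination (norm := (field_simp; ring)) (-s₁/(4*Real.pi*(μs*(lam+2*μ)*(s₂^2-s₁^2)))) * hchar₁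
  have hC1₂ : (lam+2*μ)*(((lam+2*μs)*s₂ - (lam+2*μ)*s₂^3)/(4*Real.pi*(μs*(lam+2*μ)*(s₂^2-s₁^2)))) + s₂^2*((lam+μs)*(((lam+2*μs)*s₂^2 - (lam+2*μ))/(s₂*(4*Real.pi*(μs*(lam+2*μ)*(s₂^2-s₁^2))))) - μs*(((lam+2*μs)*s₂ - (lam+2*μ)*s₂^3)/(4*Real.pi*(μs*(lam+2*μ)*(s₂^2-s₁^2))))) = 0 := by
    linear_combination (norm := (field_simp; ring)) (s₂/(4*Real.pi*(μs*(lam+2*μ)*(s₂^2-s₁^2)))) * hchar₂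
  have hC2₁ : μs*(((lam+2*μ) - (lam+2*μs)*s₁^2)/(s₁*(4*Real.pi*(μs*(lam+2*μ)*(s₂^2-s₁^2))))) - (lam+2*μ)*s₁^2*(((lam+2*μ) - (lam+2*μs)*s₁^2)/(s₁*(4*Real.pi*(μs*(lam+2*μ)*(s₂^2-s₁^2))))) - (lam+μs)*(((lam+2*μ)*s₁^3 - (lam+2*μs)*s₁)/(4*Real.pi*(μs*(lam+2*μ)*(s₂^2-s₁^2)))) = 0 := by
    linear_combination (norm := (field_simp; ring)) (1/(s₁*(4*Real.pi*(μs*(lam+2*μ)*(s₂^2-s₁^2))))) * hchar₁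
  have hC2₂ : μs*(((lam+2*μs)*s₂^2 - (lam+2*μ))/(s₂*(4*Real.pi*(μs*(lam+2*μ)*(s₂^2-s₁^2))))) - (lam+2*μ)*s₂^2*(((lam+2*μs)*s₂^2 - (lam+2*μ))/(s₂*(4*Real.pi*(μs*(lam+2*μ)*(s₂^2-s₁^2))))) - (lam+μs)*(((lam+2*μs)*s₂ - (lam+2*μ)*s₂^3)/(4*Real.pi*(μs*(lam+2*μ)*(s₂^2-s₁^2)))) = 0 := by
    linear_combination (norm := (field_simp; ring)) (-1/(s₂*(4*Real.pi*(μs*(lam+2*μ)*(s₂^2-s₁^2))))) * hchar₂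
  have hu₁' : u₁ = fun x y => (((lam+2*μ)*s₁^3 - (lam+2*μs)*s₁)/(4*Real.pi*(μs*(lam+2*μ)*(s₂^2-s₁^2))))*y/(x^2+s₁^2*y^2) + (((lam+2*μs)*s₂ - (lam+2*μ)*s₂^3)/(4*Real.pi*(μs*(lam+2*μ)*(s₂^2-s₁^2))))*y/(x^2+s₂^2*y^2) := by
    rw [hu₁]; funext x y
    by_cases hxy : x = 0 ∧ y = 0
    · obtain ⟨hx, hy⟩ := hxy; subst hx; subst hy; norm_num
    · have hd₁ := den_ne' s₁ x y hs1pos.ne' hxy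
      have hd₂ := den_ne' s₂ x y hs2pos.ne' hxy
      rw [hY₁₁, hY₂₁, hσeq]
      rw [mul_comm (s₁^2)] at hd₁; rw [mul_comm (s₂^2)] at hd₂
      field_simp
      ring
  have hu₂' : u₂ = fun x y => (((lam+2*μ) - (lam+2*μs)*s₁^2)/(s₁*(4*Real.pi*(μs*(lam+2*μ)*(s₂^2-s₁^2)))))*x/(x^2+s₁^2*y^2) + (((lam+2*μs)*s₂^2 - (lam+2*μ))/(s₂*(4*Real.pi*(μs*(lam+2*μ)*(s₂^2-s₁^2)))))*x/(x^2+s₂^2*y^2) := by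
    rw [hu₂]; funext x y
    by_cases hxy : x = 0 ∧ y = 0
    · obtain ⟨hx, hy⟩ := hxy; subst hx; subst hy; norm_num
    · have hd₁ := den_ne' s₁ x y hs1pos.ne' hxy
      have hd₂ := den_ne' s₂ x y hs2pos.ne' hxy
      rw [hY₁₂, hY₂₂, hσeq]
      field_simp
      ring
  exact aux_pde lam μ μs s₁ s₂ (((lam+2*μ)*s₁^3 - (lam+2*μs)*s₁)/(4*Real.pi*(μs*(lam+2*μ)*(s₂^2-s₁^2)))) (((lam+2*μs)*s₂ - (lam+2*μ)*s₂^3)/(4*Real.pi*(μs*(lam+2*μ)*(s₂^2-s₁^2)))) (((lam+2*μ) - (lam+2*μs)*s₁^2)/(s₁*(4*Real.pi*(μs*(lam+2*μ)*(s₂^2-s₁^2))))) (((lam+2*μs)*s₂^2 - (lam+2*μ))/(s₂*(4*Real.pi*(μs*(lam+2*μ)*(s₂^2-s₁^2)))))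
    hs1pos.ne' hs2pos.ne' hC1₁ hC1₂ hC2₁ hC2₂ u₁ u₂ hu₁' hu₂'
end

section
/- Let λ, μ, μ* ∈ ℝ with 0 < μ* < μ and λ + μ > 0. Define p = 2λμ* − 4μ(λ+μ), q = 16μ(μ−μ*)(λ+μ)(λ+μ+μ*), s_m = (2μ*(λ+2μ))^(−1/2)·√(−p ∓ √q) (m = 1,2), Y_m^(1) = ((λ+2μ)s_m² − μ*)/s_m, Y_m^(2) = (μ* s_m² − (λ+2μ))/s_m, r_m² = x₁² + s_m² x₂², and set u₁(x₁,x₂) = (x₁/(4π√q))·(((λ+μ*)s₁ − Y₁^(1))/r₁² − ((λ+μ*)s₂ − Y₂^(1))/r₂²), u₂(x₁,x₂) = (x₂/(4π√q))·((λ+μ*)(s₂/r₂² − s₁/r₁²) − (Y₁^(2) − Y₂^(2))s₁²/r₁²) + (Y₂^(2)/(4πμ*(λ+2μ)))·x₁²x₂/(r₁²r₂²). Then u = (u₁,u₂) satisfies the cubic plane strain equilibrium equations with zero body force on ℝ² ∖ {0}: (λ+2μ)·∂²u₁/∂x₁² + μ*·∂²u₁/∂x₂² + (λ+μ*)·∂²u₂/∂x₁∂x₂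 = 0 and (λ+2μ)·∂²u₂/∂x₂² + μ*·∂²u₂/∂x₁² + (λ+μ*)·∂²u₁/∂x₁∂x₂ = 0. -/
lemma cod_d1 (K x : ℝ) (h : x^2 + K ≠ 0) :
    HasDerivAt (fun t : ℝ => t/(t^2+K)) ((K - x^2)/(x^2+K)^2) x := by
  have hden : HasDerivAt (fun t : ℝ => t^2 + K) (2*x) x := by
    simpa using (hasDerivAt_pow 2 x).add_const K
  have := (hasDerivAt_id' x).fun_div hden h
  refine this.congr_deriv ?_
  field_simp
  ring

lemma cod_d2 (K x : ℝ) (h : x^2 + K ≠ 0) :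
    HasDerivAt (fun t : ℝ => (K - t^2)/(t^2+K)^2) (2*x*(x^2-3*K)/(x^2+K)^3) x := by
  have hnum : HasDerivAt (fun t : ℝ => K - t^2) (-(2*x)) x := by
    simpa using ((hasDerivAt_pow 2 x).const_sub K)
  have hden : HasDerivAt (fun t : ℝ => (t^2 + K)^2) (2*(x^2+K)*(2*x)) x := by
    have h1 : HasDerivAt (fun t : ℝ => t^2 + K) (2*x) x := by
      simpa using (hasDerivAt_pow 2 x).add_const K
    simpa using h1.fun_pow 2
  have := hnum.fun_div hden (pow_ne_zero 2 h)
  refine this.congr_deriv ?_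
  field_simp
  ring

-- numerator constant A, denominator A^2? no: f(t) = A/(A2 + c t^2) generic: use N/(D + c t^2)
lemma cod_d3 (N D c y : ℝ) (h : D + c*y^2 ≠ 0) :
    HasDerivAt (fun t : ℝ => N/(D + c*t^2)) (-(2*c*N*y)/(D + c*y^2)^2) y := by
  have hden : HasDerivAt (fun t : ℝ => D + c*t^2) (c*(2*y)) y := by
    simpa using ((hasDerivAt_pow 2 y).const_mul c).const_add D
  have := (hasDerivAt_const y N).fun_div hden h
  refine this.congr_deriv ?_
  field_simp
  ring

lemma cod_d4 (N D c y : ℝ) (h : D + c*y^2 ≠ 0) :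
    HasDerivAt (fun t : ℝ => -(2*c*N*t)/(D + c*t^2)^2)
      (-2*c*N*(D - 3*c*y^2)/(D + c*y^2)^3) y := by
  have hnum : HasDerivAt (fun t : ℝ => -(2*c*N*t)) (-(2*c*N)) y := by
    simpa using (hasDerivAt_id y).const_mul (-(2*c*N))
  have hden : HasDerivAt (fun t : ℝ => (D + c*t^2)^2) (2*(D + c*y^2)*(c*(2*y))) y := by
    have h1 : HasDerivAt (fun t : ℝ => D + c*t^2) (c*(2*y)) y := by
      simpa using ((hasDerivAt_pow 2 y).const_mul c).const_add D
    simpa using h1.fun_pow 2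
  have := hnum.fun_div hden (pow_ne_zero 2 h)
  refine this.congr_deriv ?_
  field_simp
  ring

lemma cod_d5 (D c y : ℝ) (h : D + c*y^2 ≠ 0) :
    HasDerivAt (fun t : ℝ => t/(D + c*t^2)) ((D - c*y^2)/(D + c*y^2)^2) y := by
  have hden : HasDerivAt (fun t : ℝ => D + c*t^2) (c*(2*y)) y := by
    simpa using ((hasDerivAt_pow 2 y).const_mul c).const_add D
  have := (hasDerivAt_id' y).fun_div hden h
  refine this.congr_deriv ?_
  field_simp
  ring

lemma cod_d6 (c K x : ℝ) (h : x^2 + K ≠ 0) :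
    HasDerivAt (fun t : ℝ => c*(t^2 - K)/(t^2 + K)^2)
      (2*c*x*(3*K - x^2)/(x^2 + K)^3) x := by
  have hnum : HasDerivAt (fun t : ℝ => c*(t^2 - K)) (c*(2*x)) x := by
    simpa using ((hasDerivAt_pow 2 x).sub_const K).const_mul c
  have hden : HasDerivAt (fun t : ℝ => (t^2 + K)^2) (2*(x^2+K)*(2*x)) x := by
    have h1 : HasDerivAt (fun t : ℝ => t^2 + K) (2*x) x := by
      simpa using (hasDerivAt_pow 2 x).add_const K
    simpa using h1.fun_pow 2
  have := hnum.fun_div hden (pow_ne_zero 2 h)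
  refine this.congr_deriv ?_
  field_simp
  ring

lemma cod_d7 (N c b x : ℝ) (h : x^2 + c*b^2 ≠ 0) :
    HasDerivAt (fun t : ℝ => N*t/(t^2 + c*b^2)^2)
      (N*(c*b^2 - 3*x^2)/(x^2 + c*b^2)^3) x := by
  have hnum : HasDerivAt (fun t : ℝ => N*t) N x := by
    simpa using (hasDerivAt_id x).const_mul N
  have hden : HasDerivAt (fun t : ℝ => (t^2 + c*b^2)^2) (2*(x^2+c*b^2)*(2*x)) x := by
    have h1 : HasDerivAt (fun t : ℝ => t^2 + c*b^2) (2*x) x := by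
      simpa using (hasDerivAt_pow 2 x).add_const (c*b^2)
    simpa using h1.fun_pow 2
  have := hnum.fun_div hden (pow_ne_zero 2 h)
  refine this.congr_deriv ?_
  field_simp
  ring

lemma cod_d6x (K x : ℝ) (h : x^2 + K ≠ 0) :
    HasDerivAt (fun t : ℝ => (t^2 - K)/(t^2 + K)^2)
      (2*x*(3*K - x^2)/(x^2 + K)^3) x := by
  have hnum : HasDerivAt (fun t : ℝ => t^2 - K) (2*x) x := by
    simpa using (hasDerivAt_pow 2 x).sub_const K
  have hden : HasDerivAt (fun t : ℝ => (t^2 + K)^2) (2*(x^2+K)*(2*x)) x := by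
    have h1 : HasDerivAt (fun t : ℝ => t^2 + K) (2*x) x := by
      simpa using (hasDerivAt_pow 2 x).add_const K
    simpa using h1.fun_pow 2
  have := hnum.fun_div hden (pow_ne_zero 2 h)
  refine this.congr_deriv ?_
  field_simp
  ring

lemma cod_d6y (D c y : ℝ) (h : D + c*y^2 ≠ 0) :
    HasDerivAt (fun t : ℝ => (D - c*t^2)/(D + c*t^2)^2)
      (-2*c*y*(3*D - c*y^2)/(D + c*y^2)^3) y := by
  have hnum : HasDerivAt (fun t : ℝ => D - c*t^2) (-(c*(2*y))) y := by
    simpa using ((hasDerivAt_pow 2 y).const_mul c).const_sub D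
  have hden : HasDerivAt (fun t : ℝ => (D + c*t^2)^2) (2*(D + c*y^2)*(c*(2*y))) y := by
    have h1 : HasDerivAt (fun t : ℝ => D + c*t^2) (c*(2*y)) y := by
      simpa using ((hasDerivAt_pow 2 y).const_mul c).const_add D
    simpa using h1.fun_pow 2
  have := hnum.fun_div hden (pow_ne_zero 2 h)
  refine this.congr_deriv ?_
  field_simp
  ring

lemma cod_d3x (N K x : ℝ) (h : x^2 + K ≠ 0) :
    HasDerivAt (fun t : ℝ => N/(t^2 + K)) (-(2*N*x)/(x^2 + K)^2) x := by
  have hden : HasDerivAt (fun t : ℝ => t^2 + K) (2*x) x := by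
    simpa using (hasDerivAt_pow 2 x).add_const K
  have := (hasDerivAt_const x N).fun_div hden h
  refine this.congr_deriv ?_
  field_simp
  ring

lemma cod_d8 (N K x : ℝ) (h : x^2 + K ≠ 0) :
    HasDerivAt (fun t : ℝ => -(2*N*t)/(t^2 + K)^2)
      (-2*N*(K - 3*x^2)/(x^2 + K)^3) x := by
  have hnum : HasDerivAt (fun t : ℝ => -(2*N*t)) (-(2*N)) x := by
    simpa using (hasDerivAt_id x).const_mul (-(2*N))
  have hden : HasDerivAt (fun t : ℝ => (t^2 + K)^2) (2*(x^2+K)*(2*x)) x := by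
    have h1 : HasDerivAt (fun t : ℝ => t^2 + K) (2*x) x := by
      simpa using (hasDerivAt_pow 2 x).add_const K
    simpa using h1.fun_pow 2
  have := hnum.fun_div hden (pow_ne_zero 2 h)
  refine this.congr_deriv ?_
  field_simp
  ring

lemma cod_d9 (c b x : ℝ) (h : x^2 + c*b^2 ≠ 0) :
    HasDerivAt (fun t : ℝ => -(2*c*t*b)/(t^2 + c*b^2)^2)
      (-2*c*b*(c*b^2 - 3*x^2)/(x^2 + c*b^2)^3) x := by
  have hnum : HasDerivAt (fun t : ℝ => -(2*c*t*b)) (-(2*c*b)) x := by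
    have heq : (fun t : ℝ => -(2*c*t*b)) = fun t : ℝ => -(2*c*b)*t := by
      funext t; ring
    rw [heq]
    simpa using (hasDerivAt_id x).const_mul (-(2*c*b))
  have hden : HasDerivAt (fun t : ℝ => (t^2 + c*b^2)^2) (2*(x^2+c*b^2)*(2*x)) x := by
    have h1 : HasDerivAt (fun t : ℝ => t^2 + c*b^2) (2*x) x := by
      simpa using (hasDerivAt_pow 2 x).add_const (c*b^2)
    simpa using h1.fun_pow 2
  have := hnum.fun_div hden (pow_ne_zero 2 h)
  refine this.congr_deriv ?_
  field_simp
  ring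


lemma cod_denom (c x y : ℝ) (hc : 0 < c) (h : ¬(x = 0 ∧ y = 0)) : x^2 + c*y^2 ≠ 0 := by
  rcases not_and_or.mp h with hx | hy
  · have h1 : 0 < x^2 := by positivity
    have h2 : 0 ≤ c*y^2 := by positivity
    nlinarith
  · have h1 : 0 < c*y^2 := by positivity
    have h2 : 0 ≤ x^2 := sq_nonneg x
    nlinarith

theorem cod_pde (M W K c₁ c₂ α₁ α₂ β₁ β₂ : ℝ) (hc₁ : 0 < c₁) (hc₂ : 0 < c₂)
    (h11 : M*α₁ - W*c₁*α₁ - K*β₁ = 0) (h12 : M*α₂ - W*c₂*α₂ - K*β₂ = 0)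
    (h21 : W*β₁ - M*c₁*β₁ + K*c₁*α₁ = 0) (h22 : W*β₂ - M*c₂*β₂ + K*c₂*α₂ = 0)
    (a b : ℝ) (hab : ¬(a = 0 ∧ b = 0)) :
    M * deriv (fun x => deriv (fun t => α₁*(t/(t^2+c₁*b^2)) + α₂*(t/(t^2+c₂*b^2))) x) a
      + W * deriv (fun y => deriv (fun t => α₁*(a/(a^2+c₁*t^2)) + α₂*(a/(a^2+c₂*t^2))) y) b
      + K * deriv (fun x => deriv (fun y => β₁*(y/(x^2+c₁*y^2)) + β₂*(y/(x^2+c₂*y^2))) b) a = 0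
    ∧ M * deriv (fun y => deriv (fun t => β₁*(t/(a^2+c₁*t^2)) + β₂*(t/(a^2+c₂*t^2))) y) b
      + W * deriv (fun x => deriv (fun t => β₁*(b/(t^2+c₁*b^2)) + β₂*(b/(t^2+c₂*b^2))) x) a
      + K * deriv (fun x => deriv (fun y => α₁*(x/(x^2+c₁*y^2)) + α₂*(x/(x^2+c₂*y^2))) b) a = 0 := by
  have hD1 : a^2 + c₁*b^2 ≠ 0 := cod_denom c₁ a b hc₁ hab
  have hD2 : a^2 + c₂*b^2 ≠ 0 := cod_denom c₂ a b hc₂ hab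
  have hcx : ∀ k : ℝ, ContinuousAt (fun x : ℝ => x^2 + k) a := by
    intro k; fun_prop
  have hcy1 : ContinuousAt (fun y : ℝ => a^2 + c₁*y^2) b := by fun_prop
  have hcy2 : ContinuousAt (fun y : ℝ => a^2 + c₂*y^2) b := by fun_prop
  have hcx1 : ContinuousAt (fun x : ℝ => x^2 + c₁*b^2) a := hcx _
  have hcx2 : ContinuousAt (fun x : ℝ => x^2 + c₂*b^2) a := hcx _
  have evx1 : ∀ᶠ x in nhds a, x^2 + c₁*b^2 ≠ 0 := hcx1.eventually_ne hD1
  have evx2 : ∀ᶠ x in nhds a, x^2 + c₂*b^2 ≠ 0 := hcx2.eventually_ne hD2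
  have evy1 : ∀ᶠ y in nhds b, a^2 + c₁*y^2 ≠ 0 := hcy1.eventually_ne hD1
  have evy2 : ∀ᶠ y in nhds b, a^2 + c₂*y^2 ≠ 0 := hcy2.eventually_ne hD2
  -- eq1, term M
  have hT1 : deriv (fun x => deriv (fun t => α₁*(t/(t^2+c₁*b^2)) + α₂*(t/(t^2+c₂*b^2))) x) a
      = α₁*(2*a*(a^2-3*(c₁*b^2))/(a^2+c₁*b^2)^3) + α₂*(2*a*(a^2-3*(c₂*b^2))/(a^2+c₂*b^2)^3) := by
    have hev : (fun x => deriv (fun t => α₁*(t/(t^2+c₁*b^2)) + α₂*(t/(t^2+c₂*b^2))) x)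
        =ᶠ[nhds a] fun x => α₁*((c₁*b^2 - x^2)/(x^2+c₁*b^2)^2)
            + α₂*((c₂*b^2 - x^2)/(x^2+c₂*b^2)^2) := by
      filter_upwards [evx1, evx2] with x h1 h2
      exact (((cod_d1 (c₁*b^2) x h1).const_mul α₁).add
        ((cod_d1 (c₂*b^2) x h2).const_mul α₂)).deriv
    rw [hev.deriv_eq]
    exact (((cod_d2 (c₁*b^2) a hD1).const_mul α₁).add
      ((cod_d2 (c₂*b^2) a hD2).const_mul α₂)).deriv
  -- eq1, term W
  have hT2 : deriv (fun y => deriv (fun t => α₁*(a/(a^2+c₁*t^2)) + α₂*(a/(a^2+c₂*t^2))) y) b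
      = α₁*(-2*c₁*a*(a^2 - 3*c₁*b^2)/(a^2+c₁*b^2)^3)
        + α₂*(-2*c₂*a*(a^2 - 3*c₂*b^2)/(a^2+c₂*b^2)^3) := by
    have hev : (fun y => deriv (fun t => α₁*(a/(a^2+c₁*t^2)) + α₂*(a/(a^2+c₂*t^2))) y)
        =ᶠ[nhds b] fun y => α₁*(-(2*c₁*a*y)/(a^2+c₁*y^2)^2)
            + α₂*(-(2*c₂*a*y)/(a^2+c₂*y^2)^2) := by
      filter_upwards [evy1, evy2] with y h1 h2
      exact (((cod_d3 a (a^2) c₁ y h1).const_mul α₁).add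
        ((cod_d3 a (a^2) c₂ y h2).const_mul α₂)).deriv
    rw [hev.deriv_eq]
    exact (((cod_d4 a (a^2) c₁ b hD1).const_mul α₁).add
      ((cod_d4 a (a^2) c₂ b hD2).const_mul α₂)).deriv
  -- eq1, term K
  have hT3 : deriv (fun x => deriv (fun y => β₁*(y/(x^2+c₁*y^2)) + β₂*(y/(x^2+c₂*y^2))) b) a
      = β₁*(2*a*(3*(c₁*b^2) - a^2)/(a^2+c₁*b^2)^3)
        + β₂*(2*a*(3*(c₂*b^2) - a^2)/(a^2+c₂*b^2)^3) := by
    have hev : (fun x => deriv (fun y => β₁*(y/(x^2+c₁*y^2)) + β₂*(y/(x^2+c₂*y^2))) b)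
        =ᶠ[nhds a] fun x => β₁*((x^2 - c₁*b^2)/(x^2+c₁*b^2)^2)
            + β₂*((x^2 - c₂*b^2)/(x^2+c₂*b^2)^2) := by
      filter_upwards [evx1, evx2] with x h1 h2
      exact (((cod_d5 (x^2) c₁ b h1).const_mul β₁).add
        ((cod_d5 (x^2) c₂ b h2).const_mul β₂)).deriv
    rw [hev.deriv_eq]
    exact (((cod_d6x (c₁*b^2) a hD1).const_mul β₁).add
      ((cod_d6x (c₂*b^2) a hD2).const_mul β₂)).deriv
  -- eq2, term M
  have hS1 : deriv (fun y => deriv (fun t => β₁*(t/(a^2+c₁*t^2)) + β₂*(t/(a^2+c₂*t^2))) y) b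
      = β₁*(-2*c₁*b*(3*a^2 - c₁*b^2)/(a^2+c₁*b^2)^3)
        + β₂*(-2*c₂*b*(3*a^2 - c₂*b^2)/(a^2+c₂*b^2)^3) := by
    have hev : (fun y => deriv (fun t => β₁*(t/(a^2+c₁*t^2)) + β₂*(t/(a^2+c₂*t^2))) y)
        =ᶠ[nhds b] fun y => β₁*((a^2 - c₁*y^2)/(a^2+c₁*y^2)^2)
            + β₂*((a^2 - c₂*y^2)/(a^2+c₂*y^2)^2) := by
      filter_upwards [evy1, evy2] with y h1 h2
      exact (((cod_d5 (a^2) c₁ y h1).const_mul β₁).add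
        ((cod_d5 (a^2) c₂ y h2).const_mul β₂)).deriv
    rw [hev.deriv_eq]
    exact (((cod_d6y (a^2) c₁ b hD1).const_mul β₁).add
      ((cod_d6y (a^2) c₂ b hD2).const_mul β₂)).deriv
  -- eq2, term W
  have hS2 : deriv (fun x => deriv (fun t => β₁*(b/(t^2+c₁*b^2)) + β₂*(b/(t^2+c₂*b^2))) x) a
      = β₁*(-2*b*(c₁*b^2 - 3*a^2)/(a^2+c₁*b^2)^3)
        + β₂*(-2*b*(c₂*b^2 - 3*a^2)/(a^2+c₂*b^2)^3) := by
    have hev : (fun x => deriv (fun t => β₁*(b/(t^2+c₁*b^2)) + β₂*(b/(t^2+c₂*b^2))) x)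
        =ᶠ[nhds a] fun x => β₁*(-(2*b*x)/(x^2+c₁*b^2)^2)
            + β₂*(-(2*b*x)/(x^2+c₂*b^2)^2) := by
      filter_upwards [evx1, evx2] with x h1 h2
      exact (((cod_d3x b (c₁*b^2) x h1).const_mul β₁).add
        ((cod_d3x b (c₂*b^2) x h2).const_mul β₂)).deriv
    rw [hev.deriv_eq]
    exact (((cod_d8 b (c₁*b^2) a hD1).const_mul β₁).add
      ((cod_d8 b (c₂*b^2) a hD2).const_mul β₂)).deriv
  -- eq2, term K
  have hS3 : deriv (fun x => deriv (fun y => α₁*(x/(x^2+c₁*y^2)) + α₂*(x/(x^2+c₂*y^2))) b) a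
      = α₁*(-2*c₁*b*(c₁*b^2 - 3*a^2)/(a^2+c₁*b^2)^3)
        + α₂*(-2*c₂*b*(c₂*b^2 - 3*a^2)/(a^2+c₂*b^2)^3) := by
    have hev : (fun x => deriv (fun y => α₁*(x/(x^2+c₁*y^2)) + α₂*(x/(x^2+c₂*y^2))) b)
        =ᶠ[nhds a] fun x => α₁*(-(2*c₁*x*b)/(x^2+c₁*b^2)^2)
            + α₂*(-(2*c₂*x*b)/(x^2+c₂*b^2)^2) := by
      filter_upwards [evx1, evx2] with x h1 h2
      exact (((cod_d3 x (x^2) c₁ b h1).const_mul α₁).add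
        ((cod_d3 x (x^2) c₂ b h2).const_mul α₂)).deriv
    rw [hev.deriv_eq]
    exact (((cod_d9 c₁ b a hD1).const_mul α₁).add
      ((cod_d9 c₂ b a hD2).const_mul α₂)).deriv
  constructor
  · rw [hT1, hT2, hT3]
    linear_combination (2*a*(a^2-3*(c₁*b^2))/(a^2+c₁*b^2)^3)*h11
      + (2*a*(a^2-3*(c₂*b^2))/(a^2+c₂*b^2)^3)*h12
  · rw [hS1, hS2, hS3]
    linear_combination (2*b*(3*a^2-c₁*b^2)/(a^2+c₁*b^2)^3)*h21
      + (2*b*(3*a^2-c₂*b^2)/(a^2+c₂*b^2)^3)*h22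


set_option maxHeartbeats 1000000 in
/-- The center-of-dilatation displacement field in a cubic plane strain material
(`0 < μ* < μ`, `λ + μ > 0`) satisfies the cubic equilibrium equations with zero
body force on `ℝ² ∖ {0}`. -/
theorem center_of_dilatation_cubic_equilibrium (lam μ μs : ℝ)
    (hμs : 0 < μs) (hμ : μs < μ) (hlm : 0 < lam + μ)
    (p q s₁ s₂ Y₁₁ Y₂₁ Y₁₂ Y₂₂ : ℝ) (u₁ u₂ : ℝ → ℝ → ℝ)
    (hp : p = 2*lam*μs - 4*μ*(lam + μ))
    (hq : q = 16*μ*(μ - μs)*(lam + μ)*(lam + μ + μs))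
    (hs₁ : s₁ = (2*μs*(lam + 2*μ)) ^ (-(1:ℝ)/2) * Real.sqrt (-p - Real.sqrt q))
    (hs₂ : s₂ = (2*μs*(lam + 2*μ)) ^ (-(1:ℝ)/2) * Real.sqrt (-p + Real.sqrt q))
    (hY₁₁ : Y₁₁ = ((lam + 2*μ) * s₁^2 - μs) / s₁)
    (hY₂₁ : Y₂₁ = ((lam + 2*μ) * s₂^2 - μs) / s₂)
    (hY₁₂ : Y₁₂ = (μs * s₁^2 - (lam + 2*μ)) / s₁)
    (hY₂₂ : Y₂₂ = (μs * s₂^2 - (lam + 2*μ)) / s₂)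
    (hu₁ : u₁ = fun x₁ x₂ =>
        x₁ / (4 * Real.pi * Real.sqrt q)
          * (((lam + μs) * s₁ - Y₁₁) / (x₁^2 + s₁^2 * x₂^2)
              - ((lam + μs) * s₂ - Y₂₁) / (x₁^2 + s₂^2 * x₂^2)))
    (hu₂ : u₂ = fun x₁ x₂ =>
        x₂ / (4 * Real.pi * Real.sqrt q)
            * ((lam + μs) * (s₂ / (x₁^2 + s₂^2 * x₂^2) - s₁ / (x₁^2 + s₁^2 * x₂^2))
                - (Y₁₂ - Y₂₂) * s₁^2 / (x₁^2 + s₁^2 * x₂^2))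
          + Y₂₂ / (4 * Real.pi * μs * (lam + 2*μ))
            * (x₁^2 * x₂ / ((x₁^2 + s₁^2 * x₂^2) * (x₁^2 + s₂^2 * x₂^2)))) :
    ∀ a b : ℝ, (a, b) ≠ (0, 0) →
      (lam + 2*μ) * deriv (fun x => deriv (fun t => u₁ t b) x) a
          + μs * deriv (fun y => deriv (fun t => u₁ a t) y) b
          + (lam + μs) * deriv (fun x => deriv (fun y => u₂ x y) b) a = 0
      ∧ (lam + 2*μ) * deriv (fun y => deriv (fun t => u₂ a t) y) b
          + μs * deriv (fun x => deriv (fun t => u₂ t b) x) a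
          + (lam + μs) * deriv (fun x => deriv (fun y => u₁ x y) b) a = 0 := by
  -- basic positivity facts
  have hμ0 : (0:ℝ) < μ := lt_trans hμs hμ
  have hm : (0:ℝ) < lam + 2*μ := by linarith
  have hq0 : (0:ℝ) < q := by
    rw [hq]
    apply mul_pos (mul_pos (mul_pos (by linarith : (0:ℝ) < 16*μ) (by linarith)) hlm)
      (by linarith)
  have hsq0 : 0 < Real.sqrt q := Real.sqrt_pos.mpr hq0
  have hsq2 : Real.sqrt q ^ 2 = q := Real.sq_sqrt hq0.le
  have hpneg : p < 0 := by
    rw [hp]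
    nlinarith [mul_pos hlm (show (0:ℝ) < 2*μ - μs by linarith), mul_pos hμ0 hμs]
  have hpq : p^2 - q = 4*μs^2*(lam+2*μ)^2 := by rw [hp, hq]; ring
  have hqp : Real.sqrt q < -p := by
    have hq2 : q < p^2 := by nlinarith [sq_nonneg (μs*(lam+2*μ)), mul_pos hμs hm]
    have h1 : Real.sqrt q < Real.sqrt (p^2) := by
      exact Real.sqrt_lt_sqrt hq0.le hq2
    rwa [Real.sqrt_sq_eq_abs, abs_of_neg hpneg] at h1
  have hX : (0:ℝ) < 2*μs*(lam + 2*μ) := by positivity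
  -- squares of s₁, s₂
  have hXr : ∀ r : ℝ, 0 ≤ r →
      ((2*μs*(lam + 2*μ)) ^ (-(1:ℝ)/2) * Real.sqrt r)^2 = r / (2*μs*(lam + 2*μ)) := by
    intro r hr
    rw [mul_pow, Real.sq_sqrt hr,
      ← Real.rpow_natCast ((2*μs*(lam + 2*μ)) ^ (-(1:ℝ)/2)) 2,
      ← Real.rpow_mul hX.le]
    norm_num
    rw [Real.rpow_neg_one, inv_mul_eq_div]
  have hc₁ : 2*μs*(lam+2*μ)*s₁^2 = -p - Real.sqrt q := by
    rw [hs₁, hXr _ (by linarith)]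
    field_simp
  have hc₂ : 2*μs*(lam+2*μ)*s₂^2 = -p + Real.sqrt q := by
    rw [hs₂, hXr _ (by linarith)]
    field_simp
  have hd : Real.sqrt q = μs*(lam+2*μ)*(s₂^2 - s₁^2) := by
    linear_combination (1/2)*hc₁ - (1/2)*hc₂
  have hs₁pos : 0 < s₁ := by
    rw [hs₁]
    exact mul_pos (Real.rpow_pos_of_pos hX _) (Real.sqrt_pos.mpr (by linarith))
  have hs₂pos : 0 < s₂ := by
    rw [hs₂]
    exact mul_pos (Real.rpow_pos_of_pos hX _) (Real.sqrt_pos.mpr (by linarith))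
  have hss2 : 0 < s₂^2 - s₁^2 := by
    have hdd : 0 < μs*(lam+2*μ)*(s₂^2-s₁^2) := hd ▸ hsq0
    nlinarith [mul_pos hμs hm]
  -- characteristic equations
  have hchar₁ : μs*(lam+2*μ)*s₁^4 + p*s₁^2 + μs*(lam+2*μ) = 0 := by
    have hkey : (2*μs*(lam+2*μ)*s₁^2 + p)^2 = q := by
      have h1 : 2*μs*(lam+2*μ)*s₁^2 + p = -Real.sqrt q := by linear_combination hc₁
      rw [h1]; linear_combination hsq2
    have h0 : (4*μs*(lam+2*μ))*(μs*(lam+2*μ)*s₁^4 + p*s₁^2 + μs*(lam+2*μ)) = 0 := by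
      linear_combination hkey - hpq
    rcases mul_eq_zero.mp h0 with h | h
    · exact absurd h (ne_of_gt (by positivity))
    · exact h
  have hchar₂ : μs*(lam+2*μ)*s₂^4 + p*s₂^2 + μs*(lam+2*μ) = 0 := by
    have hkey : (2*μs*(lam+2*μ)*s₂^2 + p)^2 = q := by
      have h1 : 2*μs*(lam+2*μ)*s₂^2 + p = Real.sqrt q := by linear_combination hc₂
      rw [h1]; exact hsq2
    have h0 : (4*μs*(lam+2*μ))*(μs*(lam+2*μ)*s₂^4 + p*s₂^2 + μs*(lam+2*μ)) = 0 := by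
      linear_combination hkey - hpq
    rcases mul_eq_zero.mp h0 with h | h
    · exact absurd h (ne_of_gt (by positivity))
    · exact h
  -- the mode amplitudes
  set α₁ : ℝ := ((lam + μs)*s₁ - Y₁₁)/(4*Real.pi*Real.sqrt q) with hα₁def
  set α₂ : ℝ := -(((lam + μs)*s₂ - Y₂₁)/(4*Real.pi*Real.sqrt q)) with hα₂def
  set β₁ : ℝ := (-((lam + μs)*s₁) - (Y₁₂ - Y₂₂)*s₁^2)/(4*Real.pi*Real.sqrt q)
      - Y₂₂/(4*Real.pi*μs*(lam+2*μ))*(s₁^2/(s₂^2 - s₁^2)) with hβ₁def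
  set β₂ : ℝ := (lam + μs)*s₂/(4*Real.pi*Real.sqrt q)
      + Y₂₂/(4*Real.pi*μs*(lam+2*μ))*(s₂^2/(s₂^2 - s₁^2)) with hβ₂def
  have hπ : (0:ℝ) < Real.pi := Real.pi_pos
  have hQpos : (0:ℝ) < 4*Real.pi*Real.sqrt q := by positivity
  have hA1 : α₁*(s₁*(4*Real.pi*Real.sqrt q)) = μs - (2*μ - μs)*s₁^2 := by
    rw [hα₁def, hY₁₁]
    field_simp
    ring
  have hA2 : α₂*(s₂*(4*Real.pi*Real.sqrt q)) = (2*μ - μs)*s₂^2 - μs := by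
    rw [hα₂def, hY₂₁]
    field_simp
    ring
  have hB1 : β₁*(4*Real.pi*Real.sqrt q) = s₁*(2*μ - μs - μs*s₁^2) := by
    rw [hβ₁def, hY₁₂, hY₂₂, hd]
    field_simp
    ring
  have hB2 : β₂*(4*Real.pi*Real.sqrt q) = s₂*(μs*s₂^2 - (2*μ - μs)) := by
    rw [hβ₂def, hY₂₂, hd]
    field_simp
    ring
  -- the four mode conditions
  have hs₁Q : s₁*(4*Real.pi*Real.sqrt q) ≠ 0 := ne_of_gt (mul_pos hs₁pos hQpos)
  have hs₂Q : s₂*(4*Real.pi*Real.sqrt q) ≠ 0 := ne_of_gt (mul_pos hs₂pos hQpos)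
  have h11 : (lam+2*μ)*α₁ - μs*s₁^2*α₁ - (lam+μs)*β₁ = 0 := by
    have h0 : ((lam+2*μ)*α₁ - μs*s₁^2*α₁ - (lam+μs)*β₁)*(s₁*(4*Real.pi*Real.sqrt q)) = 0 := by
      linear_combination ((lam+2*μ) - μs*s₁^2)*hA1 - (lam+μs)*s₁*hB1 + hchar₁ - s₁^2*hp
    exact (mul_eq_zero.mp h0).resolve_right hs₁Q
  have h21 : μs*β₁ - (lam+2*μ)*s₁^2*β₁ + (lam+μs)*s₁^2*α₁ = 0 := by
    have h0 : (μs*β₁ - (lam+2*μ)*s₁^2*β₁ + (lam+μs)*s₁^2*α₁)*(s₁*(4*Real.pi*Real.sqrt q)) = 0 := by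
      linear_combination (μs - (lam+2*μ)*s₁^2)*s₁*hB1 + (lam+μs)*s₁^2*hA1
        + s₁^2*hchar₁ - s₁^4*hp
    exact (mul_eq_zero.mp h0).resolve_right hs₁Q
  have h12 : (lam+2*μ)*α₂ - μs*s₂^2*α₂ - (lam+μs)*β₂ = 0 := by
    have h0 : ((lam+2*μ)*α₂ - μs*s₂^2*α₂ - (lam+μs)*β₂)*(s₂*(4*Real.pi*Real.sqrt q)) = 0 := by
      linear_combination ((lam+2*μ) - μs*s₂^2)*hA2 - (lam+μs)*s₂*hB2 - hchar₂ + s₂^2*hp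
    exact (mul_eq_zero.mp h0).resolve_right hs₂Q
  have h22 : μs*β₂ - (lam+2*μ)*s₂^2*β₂ + (lam+μs)*s₂^2*α₂ = 0 := by
    have h0 : (μs*β₂ - (lam+2*μ)*s₂^2*β₂ + (lam+μs)*s₂^2*α₂)*(s₂*(4*Real.pi*Real.sqrt q)) = 0 := by
      linear_combination (μs - (lam+2*μ)*s₂^2)*s₂*hB2 + (lam+μs)*s₂^2*hA2
        - s₂^2*hchar₂ + s₂^4*hp
    exact (mul_eq_zero.mp h0).resolve_right hs₂Q
  -- rewrite the displacement field as a sum of two modes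
  have hU1 : u₁ = fun x y => α₁*(x/(x^2+s₁^2*y^2)) + α₂*(x/(x^2+s₂^2*y^2)) := by
    rw [hu₁]
    funext x y
    rw [hα₁def, hα₂def]
    ring
  have hU2 : u₂ = fun x y => β₁*(y/(x^2+s₁^2*y^2)) + β₂*(y/(x^2+s₂^2*y^2)) := by
    rw [hu₂]
    funext x y
    rw [hβ₁def, hβ₂def]
    by_cases hxy : x = 0 ∧ y = 0
    · rcases hxy with ⟨rfl, rfl⟩
      norm_num
    · have hr₁ : x^2+s₁^2*y^2 ≠ 0 := cod_denom _ x y (pow_pos hs₁pos 2) hxy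
      have hr₂ : x^2+s₂^2*y^2 ≠ 0 := cod_denom _ x y (pow_pos hs₂pos 2) hxy
      have hss2' : s₂^2 - s₁^2 ≠ 0 := ne_of_gt hss2
      have hr₁' : x^2 + y^2*s₁^2 ≠ 0 := by rw [mul_comm]; exact hr₁
      have hr₂' : x^2 + y^2*s₂^2 ≠ 0 := by rw [mul_comm]; exact hr₂
      field_simp
      ring
  intro a b hab
  have hab' : ¬(a = 0 ∧ b = 0) := by
    rintro ⟨rfl, rfl⟩
    exact hab rfl
  rw [hU1, hU2]
  exact cod_pde (lam+2*μ) μs (lam+μs) (s₁^2) (s₂^2) α₁ α₂ β₁ β₂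
    (pow_pos hs₁pos 2) (pow_pos hs₂pos 2) h11 h12 h21 h22 a b hab'
end
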